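/- arXiv:0709.1191 — 4 statements merged into one kernel-verified Lean document; each statement's English description precedes it below -/
import Mathlib

section
/- For a partition I with conjugate partition I~, the determinant of the matrix with (p,q)-entry h_{i_p − p + q} equals the determinant of the matrix with (p,q)-entry e_{i~_p − p + q}, where h_k are complete homogeneous and e_k are elementary symmetric polynomials; i.e., the Jacobi–Trudi and dual Jacobi–Trudi determinants both compute the Schur polynomial s_I. -/
set_option autoImplicit false

open MvPolynomial
open Finset

set_option maxHeartbeats 1000000

variable {n : ℕ}

private def gg (p : Finset (Fin n) × Multiset (Fin n)) : Finset (Fin n) × Multiset (Fin n) :=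
  match (p.1.val + p.2).toFinset.min with
  | none => p
  | some j => if j ∈ p.1 then (p.1.erase j, j ::ₘ p.2) else (insert j p.1, p.2.erase j)

private lemma gg_spec (p : Finset (Fin n) × Multiset (Fin n)) (hu : p.1.val + p.2 ≠ 0) :
    (gg p).1.val + (gg p).2 = p.1.val + p.2 ∧
    (p.1.card = (gg p).1.card + 1 ∨ (gg p).1.card = p.1.card + 1) ∧ gg (gg p) = p := by
  classical
  obtain ⟨S, t⟩ := p
  dsimp only at hu ⊢
  obtain ⟨j, hj⟩ := Finset.min_of_nonempty ((Multiset.toFinset_nonempty).mpr hu)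
  have hjmem : j ∈ S.val + t := Multiset.mem_toFinset.mp (Finset.mem_of_min hj)
  by_cases hjS : j ∈ S
  · have h1 : gg (S, t) = (S.erase j, j ::ₘ t) := by
      rw [gg]; dsimp only; rw [hj]; simp [hjS]
    have hcomb : (S.erase j).val + (j ::ₘ t) = S.val + t := by
      rw [Finset.erase_val, Multiset.add_cons, ← Multiset.cons_add,
        Multiset.cons_erase (Finset.mem_def.mp hjS)]
    refine ⟨by rw [h1]; exact hcomb, ?_, ?_⟩
    · left
      rw [h1]
      dsimp only
      have := Finset.card_erase_of_mem hjS
      have hpos : 0 < S.card := Finset.card_pos.mpr ⟨j, hjS⟩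
      omega
    · rw [h1, gg]
      dsimp only
      rw [hcomb, hj]
      simp [Finset.notMem_erase, Finset.insert_erase hjS, Multiset.erase_cons_head]
  · have hjt : j ∈ t := by
      rcases Multiset.mem_add.mp hjmem with h | h
      · exact absurd (Finset.mem_def.mpr h) hjS
      · exact h
    have h1 : gg (S, t) = (insert j S, t.erase j) := by
      rw [gg]; dsimp only; rw [hj]; simp [hjS]
    have hcomb : (insert j S).val + t.erase j = S.val + t := by
      rw [Finset.insert_val_of_notMem hjS, Multiset.cons_add, ← Multiset.add_cons,
        Multiset.cons_erase hjt]
    refine ⟨by rw [h1]; exact hcomb, ?_, ?_⟩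
    · right
      rw [h1]
      exact Finset.card_insert_of_notMem hjS
    · rw [h1, gg]
      dsimp only
      rw [hcomb, hj]
      simp [Finset.mem_insert_self, Finset.erase_insert hjS, Multiset.cons_erase hjt]

private lemma multiset_sum_lemma (n j : ℕ) :
    hsymm (Fin n) ℤ j =
      ∑ t ∈ (univ : Finset (Sym (Fin n) j)).image Sym.toMultiset, (t.map X).prod := by
  rw [hsymm, Finset.sum_image]
  · rfl
  · intro x _ y _ h
    exact Sym.coe_injective h

private lemma mem_M (n j : ℕ) (t : Multiset (Fin n)) :
    t ∈ (univ : Finset (Sym (Fin n) j)).image Sym.toMultiset ↔ Multiset.card t = j := by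
  simp only [Finset.mem_image, Finset.mem_univ, true_and]
  constructor
  · rintro ⟨s, rfl⟩; exact s.2
  · rintro h; exact ⟨⟨t, h⟩, rfl⟩

theorem key_alt (n m : ℕ) (hm : 0 < m) :
    ∑ k ∈ range (m+1), (-1 : MvPolynomial (Fin n) ℤ)^k * esymm (Fin n) ℤ k
      * hsymm (Fin n) ℤ (m-k) = 0 := by
  classical
  set R := MvPolynomial (Fin n) ℤ
  set M : ℕ → Finset (Multiset (Fin n)) :=
    fun j => (univ : Finset (Sym (Fin n) j)).image Sym.toMultiset with hM
  set f : Finset (Fin n) × Multiset (Fin n) → R :=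
    fun p => (-1)^p.1.card * ((p.1.val + p.2).map X).prod with hf
  set P : Finset (Finset (Fin n) × Multiset (Fin n)) :=
    (range (m+1)).biUnion (fun k => (powersetCard k univ) ×ˢ M (m-k)) with hP
  have hmemP : ∀ p : Finset (Fin n) × Multiset (Fin n),
      p ∈ P ↔ p.1.card + Multiset.card p.2 = m := by
    intro p
    rw [hP, Finset.mem_biUnion]
    constructor
    · rintro ⟨k, hk, hmem⟩
      rw [Finset.mem_product, Finset.mem_powersetCard_univ] at hmem
      rw [Finset.mem_range] at hk
      have h2 := (mem_M n (m-k) p.2).mp hmem.2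
      omega
    · intro h
      refine ⟨p.1.card, Finset.mem_range.mpr (by omega), ?_⟩
      rw [Finset.mem_product, Finset.mem_powersetCard_univ]
      exact ⟨rfl, (mem_M n _ p.2).mpr (by omega)⟩
  have step1 : ∑ k ∈ range (m+1), (-1 : R)^k * esymm (Fin n) ℤ k
      * hsymm (Fin n) ℤ (m-k) = ∑ p ∈ P, f p := by
    rw [hP, Finset.sum_biUnion]
    · refine Finset.sum_congr rfl fun k _ => ?_
      rw [Finset.sum_product, mul_assoc, esymm, multiset_sum_lemma, Finset.sum_mul_sum,
        Finset.mul_sum]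
      refine Finset.sum_congr rfl fun S hS => ?_
      rw [Finset.mul_sum]
      refine Finset.sum_congr rfl fun t _ => ?_
      rw [Finset.mem_powersetCard_univ] at hS
      rw [hf]
      dsimp only
      rw [hS, Multiset.map_add, Multiset.prod_add, Finset.prod_eq_multiset_prod]
      try ring
    · intro k hk k' hk' hne
      simp only [Function.onFun, Finset.disjoint_left]
      rintro ⟨S, t⟩ h1 h2
      rw [Finset.mem_product, Finset.mem_powersetCard_univ] at h1 h2
      exact hne (h1.1 ▸ h2.1.symm ▸ rfl)
  rw [step1]
  have hcomb_ne : ∀ p : Finset (Fin n) × Multiset (Fin n), p ∈ P → p.1.val + p.2 ≠ 0 := by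
    intro p hp h
    have h2 := congrArg Multiset.card h
    rw [Multiset.card_add, Multiset.card_zero] at h2
    have := (hmemP p).mp hp
    have hcv : Multiset.card p.1.val = p.1.card := rfl
    omega
  refine Finset.sum_involution (fun p _ => gg p) ?_ ?_ ?_ ?_
  · -- f p + f (gg p) = 0
    intro p hp
    obtain ⟨hcomb, hcard, -⟩ := gg_spec p (hcomb_ne p hp)
    rw [hf]
    dsimp only
    rw [hcomb]
    rcases hcard with h | h <;> rw [h] <;> ring
  · -- gg p ≠ p
    intro p hp _
    obtain ⟨-, hcard, -⟩ := gg_spec p (hcomb_ne p hp)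
    intro he
    rw [he] at hcard
    omega
  · -- gg p ∈ P
    intro p hp
    obtain ⟨hcomb, -, -⟩ := gg_spec p (hcomb_ne p hp)
    rw [hmemP]
    have := (hmemP p).mp hp
    have h2 := congrArg Multiset.card hcomb
    rw [Multiset.card_add, Multiset.card_add] at h2
    have hcv : ∀ s : Finset (Fin n), Multiset.card s.val = s.card := fun _ => rfl
    rw [hcv, hcv] at h2
    omega
  · -- involution
    intro p hp
    exact (gg_spec p (hcomb_ne p hp)).2.2
/-- Complete homogeneous symmetric polynomial with the convention `h_m = 0` for `m < 0`. -/
noncomputable def hInt (n : ℕ) (k : ℤ) : MvPolynomial (Fin n) ℤ :=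
  if 0 ≤ k then hsymm (Fin n) ℤ k.toNat else 0

/-- Elementary symmetric polynomial with the convention `e_m = 0` for `m < 0`. -/
noncomputable def eInt (n : ℕ) (k : ℤ) : MvPolynomial (Fin n) ℤ :=
  if 0 ≤ k then esymm (Fin n) ℤ k.toNat else 0

lemma hInt_of_neg {n : ℕ} {k : ℤ} (h : k < 0) : hInt n k = 0 := by
  rw [hInt, if_neg (by omega)]

lemma eInt_of_neg {n : ℕ} {k : ℤ} (h : k < 0) : eInt n k = 0 := by
  rw [eInt, if_neg (by omega)]

lemma hInt_natCast (n a : ℕ) : hInt n a = hsymm (Fin n) ℤ a := by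
  rw [hInt, if_pos (by positivity), Int.toNat_natCast]

lemma eInt_natCast (n a : ℕ) : eInt n a = esymm (Fin n) ℤ a := by
  rw [eInt, if_pos (by positivity), Int.toNat_natCast]

lemma hInt_zero (n : ℕ) : hInt n 0 = 1 := by
  have := hInt_natCast n 0
  simpa [hsymm_zero] using this

lemma HE_eq_one (n N : ℕ) :
    (Matrix.of fun r s : Fin N => hInt n ((r:ℤ) - (s:ℤ))) *
    (Matrix.of fun r s : Fin N =>
      (-1 : MvPolynomial (Fin n) ℤ)^((r:ℕ)+(s:ℕ)) * eInt n ((r:ℤ) - (s:ℤ))) = 1 := by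
  classical
  refine Matrix.ext fun r s => ?_
  rw [Matrix.mul_apply, Matrix.one_apply]
  set R := MvPolynomial (Fin n) ℤ
  set G : ℕ → R := fun t =>
    hInt n ((r:ℤ) - (t:ℕ)) * ((-1)^(t + (s:ℕ)) * eInt n ((t:ℕ) - (s:ℤ))) with hG
  have hsum : ∑ t : Fin N, Matrix.of (fun r s : Fin N => hInt n ((r:ℤ) - (s:ℤ))) r t *
      Matrix.of (fun r s : Fin N =>
        (-1 : R)^((r:ℕ)+(s:ℕ)) * eInt n ((r:ℤ) - (s:ℤ))) t s = ∑ t ∈ range N, G t := by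
    rw [← Fin.sum_univ_eq_sum_range G N]
    rfl
  rw [hsum]
  by_cases hsr : (s:ℕ) ≤ (r:ℕ)
  · set m := (r:ℕ) - (s:ℕ) with hm
    have hsub : Finset.Ico (s:ℕ) ((r:ℕ)+1) ⊆ Finset.range N := by
      intro x hx
      rw [Finset.mem_Ico] at hx
      rw [Finset.mem_range]
      have := r.isLt
      omega
    have hz : ∀ x ∈ Finset.range N, x ∉ Finset.Ico (s:ℕ) ((r:ℕ)+1) → G x = 0 := by
      intro x _ hx
      rw [Finset.mem_Ico] at hx
      push_neg at hx
      rw [hG]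
      dsimp only
      by_cases hxs : x < (s:ℕ)
      · rw [eInt_of_neg (by push_cast; omega)]
        ring
      · have hxr : (r:ℕ) < x := by omega
        rw [hInt_of_neg (by push_cast; omega)]
        ring
    rw [← Finset.sum_subset hsub hz, Finset.sum_Ico_eq_sum_range]
    have hrange : (r:ℕ) + 1 - (s:ℕ) = m + 1 := by omega
    rw [hrange]
    have hcong : ∀ k ∈ Finset.range (m+1), G ((s:ℕ) + k) =
        (-1 : R)^k * esymm (Fin n) ℤ k * hsymm (Fin n) ℤ (m-k) := by
      intro k hk
      rw [Finset.mem_range] at hk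
      rw [hG]
      dsimp only
      have e1 : (r:ℤ) - ((s:ℕ) + k : ℕ) = ((m - k : ℕ) : ℤ) := by push_cast; omega
      have e2 : (((s:ℕ) + k : ℕ) : ℤ) - (s:ℤ) = ((k:ℕ) : ℤ) := by push_cast; omega
      rw [e1, e2, hInt_natCast, eInt_natCast]
      have e3 : (s:ℕ) + k + (s:ℕ) = k + 2 * (s:ℕ) := by omega
      rw [e3, pow_add, pow_mul, neg_one_sq, one_pow]
      ring
    rw [Finset.sum_congr rfl hcong]
    by_cases hm0 : m = 0
    · have hrs : r = s := Fin.ext (by omega)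
      rw [if_pos hrs, hm0]
      simp [esymm_zero, hsymm_zero]
    · rw [key_alt n m (by omega), if_neg (fun h => hm0 (by rw [h] at hm; omega))]
  · have hz : ∀ x ∈ Finset.range N, G x = 0 := by
      intro x _
      rw [hG]
      dsimp only
      by_cases hxs : x < (s:ℕ)
      · rw [eInt_of_neg (by push_cast; omega)]; ring
      · rw [hInt_of_neg (by push_cast; omega)]; ring
    rw [Finset.sum_congr rfl hz, Finset.sum_const, smul_zero,
      if_neg (fun h => hsr (by rw [h]))]

lemma det_toBlocks_of_mul_eq_one {R : Type*} [CommRing R] {α β : Type*} [Fintype α] [Fintype β]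
    [DecidableEq α] [DecidableEq β] {M E : Matrix (α ⊕ β) (α ⊕ β) R} (h : M * E = 1) :
    Matrix.det M.toBlocks₁₁ = Matrix.det M * Matrix.det E.toBlocks₂₂ := by
  set A := M.toBlocks₁₁ with hA
  set B := M.toBlocks₁₂
  set C := M.toBlocks₂₁
  set D := M.toBlocks₂₂
  set A' := E.toBlocks₁₁
  set B' := E.toBlocks₁₂
  set C' := E.toBlocks₂₁
  set D' := E.toBlocks₂₂
  have hM : M = Matrix.fromBlocks A B C D := (Matrix.fromBlocks_toBlocks M).symm
  have hE : E = Matrix.fromBlocks A' B' C' D' := (Matrix.fromBlocks_toBlocks E).symm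
  rw [hM, hE, Matrix.fromBlocks_multiply, ← Matrix.fromBlocks_one] at h
  have h12 : A * B' + B * D' = 0 := by
    have h' := congrArg Matrix.toBlocks₁₂ h
    rwa [Matrix.toBlocks_fromBlocks₁₂, Matrix.toBlocks_fromBlocks₁₂] at h'
  have h22 : C * B' + D * D' = 1 := by
    have h' := congrArg Matrix.toBlocks₂₂ h
    rwa [Matrix.toBlocks_fromBlocks₂₂, Matrix.toBlocks_fromBlocks₂₂] at h'
  have key : M * Matrix.fromBlocks 1 B' 0 D' = Matrix.fromBlocks A 0 C 1 := by
    rw [hM, Matrix.fromBlocks_multiply]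
    rw [Matrix.mul_one, Matrix.mul_one, Matrix.mul_zero, Matrix.mul_zero, add_zero, add_zero,
      h12, h22]
  have hdet := congrArg Matrix.det key
  rw [Matrix.det_mul, Matrix.det_fromBlocks_zero₂₁, Matrix.det_fromBlocks_zero₁₂] at hdet
  simp only [Matrix.det_one, one_mul, mul_one] at hdet
  exact hdet.symm

lemma sign_eq_signAux {N : ℕ} (f : Equiv.Perm (Fin N)) :
    Equiv.Perm.sign f = Equiv.Perm.signAux f := by
  have key : ∀ (s : Multiset (Fin N)) (hs : ∀ x, x ∈ s),
      Equiv.Perm.signAux3 f hs = Equiv.Perm.signAux f := by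
    intro s
    induction s using Quotient.inductionOn with
    | _ l =>
      intro hs
      show Equiv.Perm.signAux2 l f = _
      rw [← Equiv.Perm.signAux_eq_signAux2 l f (Equiv.refl _) (fun x hx => hs x)]
      have he : ((Equiv.refl (Fin N)).symm.trans f).trans (Equiv.refl (Fin N)) = f := by
        ext x
        rfl
      rw [he]
  show Equiv.Perm.signAux3 f Finset.mem_univ = _
  exact key _ _

lemma sign_riffle (l l' : ℕ) (a : Fin l → Fin (l+l')) (b : Fin l' → Fin (l+l'))
    (ha : StrictMono a) (hb : StrictMono b)
    (hbij : Function.Bijective (Sum.elim a b)) :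
    Equiv.Perm.sign (finSumFinEquiv.symm.trans (Equiv.ofBijective (Sum.elim a b) hbij)) =
      (-1 : ℤˣ)^(∑ p : Fin l, ((a p : ℕ) - (p : ℕ))) := by
  classical
  set π : Equiv.Perm (Fin (l+l')) :=
    finSumFinEquiv.symm.trans (Equiv.ofBijective (Sum.elim a b) hbij) with hπ
  have hπl : ∀ p : Fin l, π (finSumFinEquiv (Sum.inl p)) = a p := by
    intro p
    rw [hπ, Equiv.trans_apply, Equiv.symm_apply_apply]
    try rfl
  have hπr : ∀ q : Fin l', π (finSumFinEquiv (Sum.inr q)) = b q := by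
    intro q
    rw [hπ, Equiv.trans_apply, Equiv.symm_apply_apply]
    try rfl
  have hvl : ∀ p : Fin l, ((finSumFinEquiv (Sum.inl p) : Fin (l + l')) : ℕ) = (p : ℕ) := by
    intro p
    rw [finSumFinEquiv_apply_left]
    rfl
  have hvr : ∀ q : Fin l', ((finSumFinEquiv (Sum.inr q) : Fin (l + l')) : ℕ) = l + (q : ℕ) := by
    intro q
    rw [finSumFinEquiv_apply_right]
    rfl
  set Inv := (Equiv.Perm.finPairsLT (l+l')).filter (fun x => π x.1 ≤ π x.2) with hInv
  have step1 : Equiv.Perm.sign π = (-1 : ℤˣ)^Inv.card := by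
    rw [sign_eq_signAux, Equiv.Perm.signAux,
      ← Finset.prod_filter_mul_prod_filter_not (Equiv.Perm.finPairsLT (l+l'))
        (fun x => π x.1 ≤ π x.2)]
    rw [Finset.prod_congr rfl (fun x hx => if_pos (Finset.mem_filter.mp hx).2),
      Finset.prod_congr (rfl : (Equiv.Perm.finPairsLT (l+l')).filter
        (fun x => ¬ π x.1 ≤ π x.2) = _) (fun x hx => if_neg (Finset.mem_filter.mp hx).2),
      Finset.prod_const, Finset.prod_const_one, mul_one]
  set S : Finset (Fin l × Fin l') := Finset.univ.filter (fun pq => (b pq.2 : ℕ) < (a pq.1 : ℕ))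
    with hS
  set ι : Fin l × Fin l' → (Σ _ : Fin (l+l'), Fin (l+l')) :=
    fun pq => ⟨finSumFinEquiv (Sum.inr pq.2), finSumFinEquiv (Sum.inl pq.1)⟩ with hι
  have hι_inj : Function.Injective ι := by
    intro x y hxy
    rw [hι] at hxy
    dsimp only at hxy
    obtain ⟨h1, h2⟩ := Sigma.mk.inj_iff.mp hxy
    have h2' := eq_of_heq h2
    have e1 := Sum.inr_injective (finSumFinEquiv.injective h1)
    have e2 := Sum.inl_injective (finSumFinEquiv.injective h2')
    exact Prod.ext e2 e1
  have hInvS : Inv = S.image ι := by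
    ext x
    simp only [hInv, Finset.mem_filter, Equiv.Perm.mem_finPairsLT, Finset.mem_image, hS,
      Finset.mem_filter, Finset.mem_univ, true_and]
    constructor
    · rintro ⟨hlt, hle⟩
      obtain ⟨k1, hk1⟩ : ∃ k, finSumFinEquiv k = x.1 := ⟨_, finSumFinEquiv.apply_symm_apply x.1⟩
      obtain ⟨k2, hk2⟩ : ∃ k, finSumFinEquiv k = x.2 := ⟨_, finSumFinEquiv.apply_symm_apply x.2⟩
      rw [← hk1, ← hk2] at hlt hle
      rcases k1 with p1 | q1 <;> rcases k2 with p2 | q2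
      · exfalso
        rw [hπl, hπl] at hle
        rw [Fin.lt_def, hvl, hvl] at hlt
        have hp : p2 < p1 := by rw [Fin.lt_def]; exact hlt
        exact absurd hle (not_le.mpr (ha hp))
      · exfalso
        rw [Fin.lt_def, hvl, hvr] at hlt
        have := p1.isLt
        omega
      · refine ⟨(p2, q1), ?_, ?_⟩
        · rw [hπr, hπl] at hle
          have hne : b q1 ≠ a p2 := by
            intro hcon
            have h0 : Sum.elim a b (Sum.inr q1) = Sum.elim a b (Sum.inl p2) := by
              simpa using hcon
            exact Sum.inr_ne_inl (hbij.injective h0)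
          have : (b q1 : ℕ) ≤ (a p2 : ℕ) := hle
          exact lt_of_le_of_ne this (fun hcon => hne (Fin.ext hcon))
        · rw [hι]
          dsimp only
          rw [hk1, hk2]
      · exfalso
        rw [hπr, hπr] at hle
        rw [Fin.lt_def, hvr, hvr] at hlt
        have hq : q2 < q1 := by rw [Fin.lt_def]; omega
        exact absurd hle (not_le.mpr (hb hq))
    · rintro ⟨⟨p, q⟩, hpq, rfl⟩
      rw [hι]
      dsimp only
      constructor
      · rw [Fin.lt_def, hvl, hvr]
        have := p.isLt
        omega
      · rw [hπr, hπl]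
        exact le_of_lt (show b q < a p by rw [Fin.lt_def]; exact hpq)
  have step2 : Inv.card = ∑ p : Fin l,
      (Finset.univ.filter (fun q : Fin l' => (b q : ℕ) < (a p : ℕ))).card := by
    rw [hInvS, Finset.card_image_of_injective _ hι_inj, hS, Finset.card_filter,
      Fintype.sum_prod_type]
    refine Finset.sum_congr rfl fun p _ => ?_
    rw [Finset.card_filter]
  have step3 : ∀ p : Fin l,
      (Finset.univ.filter (fun q : Fin l' => (b q : ℕ) < (a p : ℕ))).card
        = (a p : ℕ) - (p : ℕ) := by
    intro p
    have hcount : (Finset.univ.filter (fun m : Fin (l+l') => m < a p)).card = (a p : ℕ) := by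
      have he : Finset.univ.filter (fun m : Fin (l+l') => m < a p) = Finset.Iio (a p) := by
        ext m
        simp only [Finset.mem_filter, Finset.mem_univ, true_and, Finset.mem_Iio]
      rw [he, Fin.card_Iio]
    have h1 : (Finset.univ.filter (fun p' : Fin l => a p' < a p)).card = (p : ℕ) := by
      have he : Finset.univ.filter (fun p' : Fin l => a p' < a p)
          = Finset.Iio p := by
        ext p'
        simp only [Finset.mem_filter, Finset.mem_univ, true_and, Finset.mem_Iio, ha.lt_iff_lt]
      rw [he, Fin.card_Iio]
    have E1 : {k : Fin l ⊕ Fin l' // Sum.elim a b k < a p} ≃ {m : Fin (l+l') // m < a p} :=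
      Equiv.subtypeEquiv (Equiv.ofBijective (Sum.elim a b) hbij) (fun k => Iff.rfl)
    have E2 : {k : Fin l ⊕ Fin l' // Sum.elim a b k < a p} ≃
        ({p' : Fin l // a p' < a p} ⊕ {q : Fin l' // b q < a p}) := Equiv.subtypeSum
    have hsplit : (Finset.univ.filter (fun m : Fin (l+l') => m < a p)).card =
        (Finset.univ.filter (fun p' : Fin l => a p' < a p)).card +
        (Finset.univ.filter (fun q : Fin l' => b q < a p)).card := by
      calc (Finset.univ.filter (fun m : Fin (l+l') => m < a p)).card
          = Fintype.card {m : Fin (l+l') // m < a p} := (Fintype.card_subtype _).symm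
        _ = Fintype.card ({p' : Fin l // a p' < a p} ⊕ {q : Fin l' // b q < a p}) :=
            Fintype.card_congr (E1.symm.trans E2)
        _ = Fintype.card {p' : Fin l // a p' < a p}
            + Fintype.card {q : Fin l' // b q < a p} := Fintype.card_sum
        _ = _ := by rw [Fintype.card_subtype, Fintype.card_subtype]
    have hconv : Finset.univ.filter (fun q : Fin l' => (b q : ℕ) < (a p : ℕ))
        = Finset.univ.filter (fun q : Fin l' => b q < a p) := by
      ext q
      simp only [Finset.mem_filter, Finset.mem_univ, true_and, Fin.lt_def]
    rw [hconv]
    omega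
  rw [step1, step2, Finset.sum_congr rfl (fun p _ => step3 p)]

lemma sum_rowLen_eq_card (μ : YoungDiagram) (l : ℕ) (h : μ.colLen 0 ≤ l) :
    ∑ i ∈ Finset.range l, μ.rowLen i = μ.cells.card := by
  classical
  have hmaps : ∀ c ∈ μ.cells, Prod.fst c ∈ Finset.range l := by
    intro c hc
    rw [Finset.mem_range]
    have hc' : (c.1, c.2) ∈ μ := (YoungDiagram.mem_cells _).mp hc
    have h1 : c.1 < μ.colLen c.2 := YoungDiagram.mem_iff_lt_colLen.mp hc'
    have h2 : μ.colLen c.2 ≤ μ.colLen 0 := μ.colLen_anti 0 c.2 (Nat.zero_le _)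
    omega
  rw [Finset.card_eq_sum_card_fiberwise hmaps]
  refine Finset.sum_congr rfl fun i _ => ?_
  rw [μ.rowLen_eq_card]
  congr 1

lemma transpose_card_eq (μ : YoungDiagram) : μ.transpose.cells.card = μ.cells.card := by
  show ((Equiv.prodComm ℕ ℕ).finsetCongr μ.cells).card = _
  rw [Equiv.finsetCongr_apply, Finset.card_map]

lemma sum_colLen_eq_card (μ : YoungDiagram) (l' : ℕ) (h : μ.rowLen 0 ≤ l') :
    ∑ q ∈ Finset.range l', μ.colLen q = μ.cells.card := by
  have h0 : μ.transpose.colLen 0 ≤ l' := by rwa [μ.colLen_transpose]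
  have := sum_rowLen_eq_card μ.transpose l' h0
  rw [transpose_card_eq] at this
  rw [← this]
  refine Finset.sum_congr rfl fun q _ => ?_
  rw [μ.rowLen_transpose]

lemma neg_one_pow_even {R : Type*} [Monoid R] [HasDistribNeg R] {k : ℕ} (h : Even k) :
    (-1 : R)^k = 1 := Even.neg_one_pow h

/-- The Jacobi–Trudi determinant `det(h_{i_p - p + q})` of a partition and the dual
Jacobi–Trudi determinant `det(e_{ĩ_p - p + q})` of its conjugate partition agree:
both compute the Schur polynomial `s_I`.  Here the partition `I` is encoded as a
Young diagram `μ`, whose row lengths are the parts `i_p` of `I` and whose column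
lengths are the parts `ĩ_p` of the conjugate partition `I~ = μ.transpose`;
`l` (resp. `l'`) is at least the number of parts of `I` (resp. of `I~`). -/
theorem jacobi_trudi_eq_dual_jacobi_trudi (n : ℕ) (μ : YoungDiagram)
    (l l' : ℕ) (hl : μ.colLen 0 ≤ l) (hl' : μ.rowLen 0 ≤ l') :
    Matrix.det (Matrix.of fun p q : Fin l =>
        hInt n ((μ.rowLen p : ℤ) - (p : ℤ) + (q : ℤ))) =
    Matrix.det (Matrix.of fun p q : Fin l' =>
        eInt n ((μ.transpose.rowLen p : ℤ) - (p : ℤ) + (q : ℤ))) := by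
  classical
  set R := MvPolynomial (Fin n) ℤ with hR
  have hrow_le : ∀ i : ℕ, μ.rowLen i ≤ l' :=
    fun i => le_trans (μ.rowLen_anti 0 i (Nat.zero_le _)) hl'
  have hcol_le : ∀ j : ℕ, μ.colLen j ≤ l :=
    fun j => le_trans (μ.colLen_anti 0 j (Nat.zero_le _)) hl
  set a : Fin l → Fin (l + l') := fun p =>
    ⟨μ.rowLen (l - 1 - (p:ℕ)) + (p:ℕ), by
      have := hrow_le (l - 1 - (p:ℕ)); have := p.isLt; omega⟩ with ha_def
  set b : Fin l' → Fin (l + l') := fun q =>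
    ⟨l - μ.colLen (q:ℕ) + (q:ℕ), by
      have := hcol_le (q:ℕ); have := q.isLt; omega⟩ with hb_def
  have ha : StrictMono a := by
    intro p p' hpp
    rw [Fin.lt_def] at hpp ⊢
    have h1 : μ.rowLen (l - 1 - (p:ℕ)) ≤ μ.rowLen (l - 1 - (p':ℕ)) :=
      μ.rowLen_anti _ _ (by omega)
    show μ.rowLen (l - 1 - (p:ℕ)) + (p:ℕ) < μ.rowLen (l - 1 - (p':ℕ)) + (p':ℕ)
    omega
  have hb : StrictMono b := by
    intro q q' hqq
    rw [Fin.lt_def] at hqq ⊢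
    have h1 : μ.colLen (q':ℕ) ≤ μ.colLen (q:ℕ) := μ.colLen_anti _ _ (by omega)
    have h2 := hcol_le (q:ℕ)
    show l - μ.colLen (q:ℕ) + (q:ℕ) < l - μ.colLen (q':ℕ) + (q':ℕ)
    omega
  have hdisj : ∀ (p : Fin l) (q : Fin l'), (a p : ℕ) ≠ (b q : ℕ) := by
    intro p q
    show μ.rowLen (l - 1 - (p:ℕ)) + (p:ℕ) ≠ l - μ.colLen (q:ℕ) + (q:ℕ)
    have hp : (p:ℕ) < l := p.isLt
    have hq : (q:ℕ) < l' := q.isLt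
    have hcq := hcol_le (q:ℕ)
    by_cases hmem : ((l - 1 - (p:ℕ), (q:ℕ)) ∈ μ)
    · have h1 : (q:ℕ) < μ.rowLen (l - 1 - (p:ℕ)) := YoungDiagram.mem_iff_lt_rowLen.mp hmem
      have h2 : l - 1 - (p:ℕ) < μ.colLen (q:ℕ) := YoungDiagram.mem_iff_lt_colLen.mp hmem
      omega
    · have h1 : μ.rowLen (l - 1 - (p:ℕ)) ≤ (q:ℕ) :=
        not_lt.mp (fun hcon => hmem (YoungDiagram.mem_iff_lt_rowLen.mpr hcon))
      have h2 : μ.colLen (q:ℕ) ≤ l - 1 - (p:ℕ) :=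
        not_lt.mp (fun hcon => hmem (YoungDiagram.mem_iff_lt_colLen.mpr hcon))
      omega
  have hinj : Function.Injective (Sum.elim a b) := by
    rintro (p | q) (p' | q') h
    · exact congrArg Sum.inl (ha.injective h)
    · exact absurd (congrArg Fin.val h) (hdisj p q')
    · exact absurd (congrArg Fin.val h).symm (hdisj p' q)
    · exact congrArg Sum.inr (hb.injective h)
  have hbij : Function.Bijective (Sum.elim a b) :=
    (Fintype.bijective_iff_injective_and_card _).mpr ⟨hinj, by simp⟩
  set e : (Fin l ⊕ Fin l') ≃ Fin (l + l') := Equiv.ofBijective _ hbij with he_def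
  have hvl : ∀ q : Fin l, ((finSumFinEquiv (Sum.inl q) : Fin (l + l')) : ℕ) = (q : ℕ) := by
    intro q
    rw [finSumFinEquiv_apply_left]
    rfl
  have hvr : ∀ i : Fin l', ((finSumFinEquiv (Sum.inr i) : Fin (l + l')) : ℕ) = l + (i : ℕ) := by
    intro i
    rw [finSumFinEquiv_apply_right]
    rfl
  set H : Matrix (Fin (l+l')) (Fin (l+l')) R :=
    Matrix.of (fun r s : Fin (l+l') => hInt n ((r:ℤ) - (s:ℤ))) with hH
  set Em : Matrix (Fin (l+l')) (Fin (l+l')) R :=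
    Matrix.of (fun r s : Fin (l+l') => (-1)^((r:ℕ)+(s:ℕ)) * eInt n ((r:ℤ) - (s:ℤ))) with hEm
  have hHE : H * Em = 1 := HE_eq_one n (l+l')
  set M' := H.submatrix ⇑e ⇑(finSumFinEquiv : Fin l ⊕ Fin l' ≃ Fin (l+l')) with hM'
  set E' := Em.submatrix ⇑(finSumFinEquiv : Fin l ⊕ Fin l' ≃ Fin (l+l')) ⇑e with hE'
  have hM'E' : M' * E' = 1 := by
    rw [hM', hE', Matrix.submatrix_mul_equiv, hHE, Matrix.submatrix_one_equiv]
  have hblocks := det_toBlocks_of_mul_eq_one hM'E'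
  -- the JT block
  have hA : M'.toBlocks₁₁ = (Matrix.of fun p q : Fin l =>
      hInt n ((μ.rowLen p : ℤ) - (p : ℤ) + (q : ℤ))).submatrix
        ⇑(Fin.revPerm : Equiv.Perm (Fin l)) ⇑(Fin.revPerm : Equiv.Perm (Fin l)) := by
    refine Matrix.ext fun p q => ?_
    show H (e (Sum.inl p)) (finSumFinEquiv (Sum.inl q)) = _
    rw [Matrix.submatrix_apply]
    have h1 : ((e (Sum.inl p) : Fin (l+l')) : ℕ) = μ.rowLen (l - 1 - (p:ℕ)) + (p:ℕ) := rfl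
    have h2 := hvl q
    have hrevp : ((Fin.revPerm p : Fin l) : ℕ) = l - 1 - (p:ℕ) := by
      show ((Fin.rev p : Fin l) : ℕ) = _
      rw [Fin.val_rev]
      omega
    have hrevq : ((Fin.revPerm q : Fin l) : ℕ) = l - 1 - (q:ℕ) := by
      show ((Fin.rev q : Fin l) : ℕ) = _
      rw [Fin.val_rev]
      omega
    rw [hH]
    show hInt n (((e (Sum.inl p) : Fin (l+l')) : ℕ) - ((finSumFinEquiv (Sum.inl q) : Fin (l+l')) : ℕ) : ℤ)
      = hInt n ((μ.rowLen (Fin.revPerm p : Fin l) : ℤ) - ((Fin.revPerm p : Fin l) : ℤ)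
          + ((Fin.revPerm q : Fin l) : ℤ))
    rw [h1, h2, hrevp, hrevq]
    congr 1
    have hp : (p:ℕ) < l := p.isLt
    have hq : (q:ℕ) < l := q.isLt
    omega
  -- the dual block
  set K := Matrix.of (fun p q : Fin l' =>
    eInt n ((μ.transpose.rowLen p : ℤ) - (p : ℤ) + (q : ℤ))) with hK
  have hD : E'.toBlocks₂₂ = Matrix.diagonal (fun i : Fin l' => (-1:R)^(l + (i:ℕ)))
      * K.transpose * Matrix.diagonal (fun p : Fin l' => (-1:R)^((b p : ℕ))) := by
    refine Matrix.ext fun i p => ?_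
    rw [Matrix.mul_diagonal, Matrix.diagonal_mul, Matrix.transpose_apply]
    have h1 := hvr i
    have h2 : ((e (Sum.inr p) : Fin (l+l')) : ℕ) = l - μ.colLen (p:ℕ) + (p:ℕ) := rfl
    show (-1:R)^(((finSumFinEquiv (Sum.inr i) : Fin (l+l')) : ℕ)
          + ((e (Sum.inr p) : Fin (l+l')) : ℕ))
        * eInt n ((((finSumFinEquiv (Sum.inr i) : Fin (l+l')) : ℕ) : ℤ)
          - (((e (Sum.inr p) : Fin (l+l')) : ℕ) : ℤ))
      = (-1:R)^(l + (i:ℕ)) * K p i * (-1:R)^((b p : ℕ))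
    have h3 : ((b p : ℕ)) = l - μ.colLen (p:ℕ) + (p:ℕ) := rfl
    rw [h1, h2, h3, hK]
    show _ = (-1:R)^(l + (i:ℕ))
        * eInt n ((μ.transpose.rowLen (p:ℕ) : ℤ) - ((p:ℕ) : ℤ) + ((i:ℕ) : ℤ))
        * (-1:R)^(l - μ.colLen (p:ℕ) + (p:ℕ))
    rw [YoungDiagram.rowLen_transpose]
    have harg : ((l + (i:ℕ) : ℕ) : ℤ) - ((l - μ.colLen (p:ℕ) + (p:ℕ) : ℕ) : ℤ)
        = (μ.colLen (p:ℕ) : ℤ) - ((p:ℕ) : ℤ) + ((i:ℕ) : ℤ) := by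
      have := hcol_le (p:ℕ)
      omega
    rw [harg, pow_add]
    ring
  -- determinants
  have hdetA : M'.toBlocks₁₁.det = Matrix.det (Matrix.of fun p q : Fin l =>
      hInt n ((μ.rowLen p : ℤ) - (p : ℤ) + (q : ℤ))) := by
    rw [hA, Matrix.det_submatrix_equiv_self]
  have hdetH : H.det = 1 := by
    have htri : H.BlockTriangular OrderDual.toDual := by
      intro r s hrs
      have : (r : ℕ) < (s : ℕ) := hrs
      show hInt n ((r:ℤ) - (s:ℤ)) = 0
      exact hInt_of_neg (by omega)
    rw [Matrix.det_of_lowerTriangular H htri]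
    have : ∀ r : Fin (l+l'), H r r = 1 := by
      intro r
      show hInt n ((r:ℤ) - (r:ℤ)) = 1
      rw [sub_self, hInt_zero]
    rw [Finset.prod_congr rfl (fun r _ => this r), Finset.prod_const_one]
  set π : Equiv.Perm (Fin (l+l')) :=
    finSumFinEquiv.symm.trans (Equiv.ofBijective (Sum.elim a b) hbij) with hπ
  have hπg : ∀ k, π (finSumFinEquiv k) = e k := by
    intro k
    rw [hπ, Equiv.trans_apply, Equiv.symm_apply_apply]
    try rfl
  have hsubm : M' = (H.submatrix ⇑π id).submatrix
      ⇑(finSumFinEquiv : Fin l ⊕ Fin l' ≃ Fin (l+l'))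
      ⇑(finSumFinEquiv : Fin l ⊕ Fin l' ≃ Fin (l+l')) := by
    rw [hM', Matrix.submatrix_submatrix]
    have hfun : ⇑e = ⇑π ∘ ⇑(finSumFinEquiv : Fin l ⊕ Fin l' ≃ Fin (l+l')) :=
      funext fun k => (hπg k).symm
    rw [hfun]
    rfl
  have hdetM' : M'.det = ((Equiv.Perm.sign π : ℤ) : R) := by
    rw [hsubm, Matrix.det_submatrix_equiv_self, Matrix.det_permute, hdetH, mul_one]
  have hsign : Equiv.Perm.sign π = (-1 : ℤˣ)^(μ.cells.card) := by
    rw [hπ, sign_riffle l l' a b ha hb hbij]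
    congr 1
    calc ∑ p : Fin l, ((a p : ℕ) - (p:ℕ))
        = ∑ p : Fin l, μ.rowLen (l - 1 - (p:ℕ)) := Finset.sum_congr rfl (fun p _ => by
          show μ.rowLen (l - 1 - (p:ℕ)) + (p:ℕ) - (p:ℕ) = _
          omega)
      _ = ∑ i ∈ Finset.range l, μ.rowLen (l - 1 - i) :=
          Fin.sum_univ_eq_sum_range (fun i => μ.rowLen (l - 1 - i)) l
      _ = ∑ i ∈ Finset.range l, μ.rowLen i := Finset.sum_range_reflect _ l
      _ = μ.cells.card := sum_rowLen_eq_card μ l hl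
  have hdetD : E'.toBlocks₂₂.det = (-1:R)^(∑ i : Fin l', (l + (i:ℕ))) * K.det
      * (-1:R)^(∑ p : Fin l', ((b p : ℕ))) := by
    rw [hD, Matrix.det_mul, Matrix.det_mul, Matrix.det_diagonal, Matrix.det_diagonal,
      Matrix.det_transpose, Finset.prod_pow_eq_pow_sum, Finset.prod_pow_eq_pow_sum]
  have hC : ∑ p : Fin l', μ.colLen (p:ℕ) = μ.cells.card := by
    rw [Fin.sum_univ_eq_sum_range (fun i => μ.colLen i) l']
    exact sum_colLen_eq_card μ l' hl'
  have hS2C : (∑ p : Fin l', ((b p : ℕ))) + μ.cells.card = ∑ p : Fin l', (l + (p:ℕ)) := by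
    rw [← hC, ← Finset.sum_add_distrib]
    refine Finset.sum_congr rfl fun p _ => ?_
    have := hcol_le (p:ℕ)
    show (l - μ.colLen (p:ℕ) + (p:ℕ)) + μ.colLen (p:ℕ) = l + (p:ℕ)
    omega
  have hcast : ((Equiv.Perm.sign π : ℤ) : R) = (-1:R)^(μ.cells.card) := by
    rw [hsign]
    push_cast
    ring
  calc Matrix.det (Matrix.of fun p q : Fin l =>
        hInt n ((μ.rowLen p : ℤ) - (p : ℤ) + (q : ℤ)))
      = M'.toBlocks₁₁.det := hdetA.symm
    _ = M'.det * E'.toBlocks₂₂.det := hblocks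
    _ = (-1:R)^(μ.cells.card) * ((-1:R)^(∑ i : Fin l', (l + (i:ℕ))) * K.det
        * (-1:R)^(∑ p : Fin l', ((b p : ℕ)))) := by rw [hdetM', hcast, hdetD]
    _ = (-1:R)^(μ.cells.card + (∑ i : Fin l', (l + (i:ℕ))) + ∑ p : Fin l', ((b p : ℕ)))
        * K.det := by rw [pow_add, pow_add]; ring
    _ = K.det := by
        rw [neg_one_pow_even ⟨μ.cells.card + ∑ p : Fin l', ((b p : ℕ)), by omega⟩, one_mul]
end

section
/- Let I = (i_1,...,i_m) and J = (j_1,...,j_m) be partitions with I ⊇ J (i.e., i_a ≥ j_a for all a). Then the binomial determinant d_{I,J} = det( C(i_a + m − a, j_b + m − b) )_{1 ≤ a,b ≤ m} is a nonnegative integer, where C(n,k) denotes the binomial coefficient. -/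
set_option autoImplicit false

open Finset Matrix

/-- Telescoping "hockey stick": `C(x,q) - C(y,q) = ∑_{t∈[y,x)} C(t,q-1)` for `q ≥ 1`. -/
lemma choose_sub_choose (q : ℕ) (hq : 1 ≤ q) {y x : ℕ} (hyx : y ≤ x) :
    (x.choose q : ℤ) - y.choose q = ∑ t ∈ Finset.Ico y x, ((t.choose (q-1) : ℤ)) := by
  induction x, hyx using Nat.le_induction with
  | base => simp
  | succ x hx ih =>
    rw [Finset.sum_Ico_succ_top hx, ← ih]
    have h : (x+1).choose q = x.choose (q-1) + x.choose q := by
      obtain ⟨q', rfl⟩ : ∃ q', q = q' + 1 := ⟨q - 1, by omega⟩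
      simp [Nat.choose_succ_succ']
    rw [h]; push_cast; ring

/-- If some `p b < q b` (with `p`, `q` antitone), the binomial determinant vanishes. -/
lemma det_choose_eq_zero {m : ℕ} (p q : Fin m → ℕ) (hp : Antitone p) (hq : Antitone q)
    (b : Fin m) (hb : p b < q b) :
    (Matrix.of fun a c : Fin m => ((p a).choose (q c) : ℤ)).det = 0 := by
  rw [Matrix.det_apply]
  refine Finset.sum_eq_zero fun σ _ => ?_
  have : ∃ i : Fin m, i ≤ b ∧ b ≤ σ i := by
    by_contra h'
    push_neg at h'
    have hcard : (Finset.Iic b).card ≤ (Finset.Iio b).card := by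
      refine Finset.card_le_card_of_injOn σ (fun i hi => ?_) (σ.injective.injOn)
      exact Finset.mem_Iio.mpr (h' i (Finset.mem_Iic.mp hi))
    rw [Fin.card_Iic, Fin.card_Iio] at hcard
    omega
  obtain ⟨i, hi1, hi2⟩ := this
  have hzero : (p (σ i)).choose (q i) = 0 := by
    apply Nat.choose_eq_zero_of_lt
    calc p (σ i) ≤ p b := hp hi2
      _ < q b := hb
      _ ≤ q i := hq hi1
  have : (∏ j, Matrix.of (fun a c : Fin m => ((p a).choose (q c) : ℤ)) (σ j) j) = 0 := by
    apply Finset.prod_eq_zero (Finset.mem_univ i)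
    simp [hzero]
  rw [this, smul_zero]

/-- Multilinear expansion of the determinant along all rows simultaneously. -/
lemma det_row_sum (k : ℕ) (g : Fin k → ℕ → (Fin k → ℤ)) (A : Fin k → Finset ℕ) :
    (Matrix.of fun i : Fin k => ∑ t ∈ A i, g i t).det =
      ∑ r ∈ Fintype.piFinset A, (Matrix.of fun i : Fin k => g i (r i)).det :=
  (Matrix.detRowAlternating :
      AlternatingMap ℤ (Fin k → ℤ) ℤ (Fin k)).toMultilinearMap.map_sum_finset g A

/-- Key lemma: for strictly decreasing `p q : Fin m → ℕ` the binomial determinant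
`det (C(p a, q b))` is nonnegative.  Inducted on `n ≥ m + ∑ q`. -/
lemma det_choose_nonneg_key : ∀ n : ℕ, ∀ m : ℕ, ∀ p q : Fin m → ℕ,
    StrictAnti p → StrictAnti q → m + ∑ b, q b ≤ n →
    0 ≤ (Matrix.of fun a b : Fin m => ((p a).choose (q b) : ℤ)).det := by
  intro n
  induction n with
  | zero =>
    intro m p q _ _ hm
    have : m = 0 := by omega
    subst this
    rw [Matrix.det_isEmpty]; norm_num
  | succ n ih =>
    intro m p q hp hq hm
    match m, p, q, hp, hq, hm with
    | 0, p, q, hp, hq, hm => rw [Matrix.det_isEmpty]; norm_num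
    | (k+1), p, q, hp, hq, hm =>
    by_cases hpq : ∃ b, p b < q b
    · obtain ⟨b, hb⟩ := hpq
      rw [det_choose_eq_zero p q hp.antitone hq.antitone b hb]
    push_neg at hpq   -- ∀ b, q b ≤ p b
    by_cases hql : 1 ≤ q (Fin.last k)
    · -- Case B: all `q b ≥ 1`; scale rows and columns using `C(p,q)·q = p·C(p-1,q-1)`.
      have hq1 : ∀ b, 1 ≤ q b := fun b => le_trans hql (hq.antitone (Fin.le_last b))
      have hp1 : ∀ a, 1 ≤ p a := fun a => le_trans (hq1 a) (hpq a)
      set p' : Fin (k+1) → ℕ := fun a => p a - 1 with hp'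
      set q' : Fin (k+1) → ℕ := fun b => q b - 1 with hq'
      have hp's : StrictAnti p' := fun a b hab => by
        have := hp hab; have := hp1 b; simp only [hp']; omega
      have hq's : StrictAnti q' := fun a b hab => by
        have := hq hab; have := hq1 b; simp only [hq']; omega
      have hkey : ∀ a b : Fin (k+1),
          ((p a).choose (q b) : ℤ) * (q b : ℤ) = (p a : ℤ) * ((p' a).choose (q' b) : ℤ) := by
        intro a b
        have h1 : p a - 1 + 1 = p a := by have := hp1 a; omega
        have h2 : q b - 1 + 1 = q b := by have := hq1 b; omega
        have h3 := Nat.add_one_mul_choose_eq (p a - 1) (q b - 1)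
        rw [h1, h2] at h3
        have h4 := congrArg (Nat.cast : ℕ → ℤ) h3
        push_cast at h4
        simp only [hp', hq']
        linarith
      have hmat : (Matrix.of fun a b : Fin (k+1) => ((p a).choose (q b) : ℤ)) *
          Matrix.diagonal (fun b => (q b : ℤ)) =
          Matrix.diagonal (fun a => (p a : ℤ)) *
          (Matrix.of fun a b : Fin (k+1) => ((p' a).choose (q' b) : ℤ)) := by
        ext a b
        rw [Matrix.mul_diagonal, Matrix.diagonal_mul]
        exact hkey a b
      have hdet := congrArg Matrix.det hmat
      rw [Matrix.det_mul, Matrix.det_mul, Matrix.det_diagonal, Matrix.det_diagonal] at hdet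
      have hQ : (0:ℤ) < ∏ b, (q b : ℤ) := Finset.prod_pos fun b _ => by exact_mod_cast hq1 b
      have hP : (0:ℤ) ≤ ∏ a, (p a : ℤ) := Finset.prod_nonneg fun a _ => by positivity
      have hN : 0 ≤ (Matrix.of fun a b : Fin (k+1) => ((p' a).choose (q' b) : ℤ)).det := by
        apply ih (k+1) p' q' hp's hq's
        have hs : ∑ b, q' b + (k+1) = ∑ b, q b := by
          have : ∑ b, (q' b + 1) = ∑ b, q b := by
            refine Finset.sum_congr rfl fun b _ => ?_
            simp only [hq']; have := hq1 b; omega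
          rw [Finset.sum_add_distrib] at this
          simpa using this
        have hsum : k + 1 ≤ ∑ b, q b := by
          calc k + 1 = ∑ _b : Fin (k+1), 1 := by simp
            _ ≤ ∑ b, q b := Finset.sum_le_sum fun b _ => hq1 b
        omega
      exact (mul_nonneg_iff_of_pos_right hQ).mp (hdet ▸ mul_nonneg hP hN)
    · -- `q (last) = 0`
      have hql0 : q (Fin.last k) = 0 := by omega
      by_cases hpl : p (Fin.last k) = 0
      · -- Case C: the last row is the last standard basis vector.
        rw [Matrix.det_succ_row _ (Fin.last k)]
        rw [Finset.sum_eq_single (Fin.last k)]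
        · have h1 : Matrix.of (fun a b : Fin (k+1) => ((p a).choose (q b) : ℤ))
              (Fin.last k) (Fin.last k) = 1 := by
            simp [hpl, hql0]
          rw [h1]
          have h2 : ((-1 : ℤ)) ^ ((Fin.last k : ℕ) + (Fin.last k : ℕ)) = 1 :=
            Even.neg_one_pow ⟨(Fin.last k : ℕ), rfl⟩
          rw [h2, one_mul, one_mul]
          have hsub : ((Matrix.of fun a b : Fin (k+1) => ((p a).choose (q b) : ℤ)).submatrix
              (Fin.last k).succAbove (Fin.last k).succAbove) =
              Matrix.of fun a b : Fin k => (((p a.castSucc).choose (q b.castSucc)) : ℤ) := by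
            ext a b
            simp [Fin.succAbove_last]
          rw [hsub]
          apply ih k (fun a => p a.castSucc) (fun b => q b.castSucc)
            (hp.comp_strictMono Fin.strictMono_castSucc)
            (hq.comp_strictMono Fin.strictMono_castSucc)
          have : ∑ b : Fin (k+1), q b = ∑ b : Fin k, q b.castSucc + q (Fin.last k) :=
            Fin.sum_univ_castSucc _
          omega
        · intro b _ hb
          have hbl : b < Fin.last k := lt_of_le_of_ne (Fin.le_last b) hb
          have : (p (Fin.last k)).choose (q b) = 0 := by
            apply Nat.choose_eq_zero_of_lt
            rw [hpl]
            have := hq hbl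
            omega
          simp [this]
        · intro h; exact absurd (Finset.mem_univ _) h
      · -- Case D: row operations, expansion along the last column, multilinearity.
        set M : Matrix (Fin (k+1)) (Fin (k+1)) ℤ :=
          Matrix.of fun a b : Fin (k+1) => ((p a).choose (q b) : ℤ) with hM
        set N : Matrix (Fin (k+1)) (Fin (k+1)) ℤ :=
          Matrix.of fun a c : Fin (k+1) => if (c : ℕ) = (a : ℕ) + 1 then (1:ℤ) else 0 with hN
        set L : Matrix (Fin (k+1)) (Fin (k+1)) ℤ := 1 - N with hL
        have hLtri : L.BlockTriangular id := by
          intro i j hij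
          simp only [id] at hij
          have h1 : (1 : Matrix (Fin (k+1)) (Fin (k+1)) ℤ) i j = 0 :=
            Matrix.one_apply_ne (ne_of_gt hij)
          have h2 : N i j = 0 := by
            simp only [hN, Matrix.of_apply]
            have : (j : ℕ) ≠ (i : ℕ) + 1 := by
              have : (j : ℕ) < (i : ℕ) := hij
              omega
            simp [this]
          simp [hL, Matrix.sub_apply, h1, h2]
        have hdetL : L.det = 1 := by
          rw [Matrix.det_of_upperTriangular hLtri]
          apply Finset.prod_eq_one
          intro i _
          simp [hL, hN, Matrix.sub_apply, Matrix.one_apply_eq]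
        set M' : Matrix (Fin (k+1)) (Fin (k+1)) ℤ :=
          Matrix.of fun a b : Fin (k+1) =>
            if h : (a : ℕ) < k then M a b - M ⟨(a : ℕ) + 1, by omega⟩ b else M a b with hM'
        have hLM : L * M = M' := by
          ext a b
          have hNM : (N * M) a b =
              if h : (a : ℕ) < k then M ⟨(a : ℕ) + 1, by omega⟩ b else 0 := by
            rw [Matrix.mul_apply]
            by_cases ha : (a : ℕ) < k
            · rw [dif_pos ha, Finset.sum_eq_single (⟨(a : ℕ) + 1, by omega⟩ : Fin (k+1))]
              · simp [hN]
              · intro c _ hc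
                have : (c : ℕ) ≠ (a : ℕ) + 1 := fun h => hc (Fin.ext h)
                simp [hN, this]
              · intro h; exact absurd (Finset.mem_univ _) h
            · rw [dif_neg ha]
              refine Finset.sum_eq_zero fun c _ => ?_
              have : (c : ℕ) ≠ (a : ℕ) + 1 := by have := c.isLt; omega
              simp [hN, this]
          have hLMa : (L * M) a b = M a b - (N * M) a b := by
            simp [hL, Matrix.sub_mul, Matrix.sub_apply]
          rw [hLMa, hNM]
          simp only [hM', Matrix.of_apply]
          by_cases ha : (a : ℕ) < k
          · rw [dif_pos ha, dif_pos ha]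
          · rw [dif_neg ha, dif_neg ha]; ring
        have hdetMM' : M.det = M'.det := by
          rw [← hLM, Matrix.det_mul, hdetL, one_mul]
        rw [hdetMM']
        rw [Matrix.det_succ_column _ (Fin.last k)]
        rw [Finset.sum_eq_single (Fin.last k)]
        · have h1 : M' (Fin.last k) (Fin.last k) = 1 := by
            simp only [hM', Matrix.of_apply]
            rw [dif_neg (by simp)]
            simp only [hM, Matrix.of_apply]
            rw [hql0, Nat.choose_zero_right]
            norm_num
          have h2 : ((-1 : ℤ)) ^ ((Fin.last k : ℕ) + (Fin.last k : ℕ)) = 1 :=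
            Even.neg_one_pow ⟨(Fin.last k : ℕ), rfl⟩
          rw [h1, h2, one_mul, one_mul]
          have hq1 : ∀ b : Fin k, 1 ≤ q b.castSucc := by
            intro b
            have := hq (Fin.castSucc_lt_last b)
            omega
          have hD : (M'.submatrix (Fin.last k).succAbove (Fin.last k).succAbove) =
              Matrix.of fun (i : Fin k) =>
                ∑ t ∈ Finset.Ico (p i.succ) (p i.castSucc),
                  (fun b : Fin k => ((t.choose (q b.castSucc - 1)) : ℤ)) := by
            ext i b
            simp only [Matrix.submatrix_apply, Fin.succAbove_last, Matrix.of_apply]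
            rw [Finset.sum_apply]
            simp only [hM', Matrix.of_apply]
            rw [dif_pos (by exact i.isLt)]
            have hfin : (⟨((i.castSucc : Fin (k+1)) : ℕ) + 1,
                by have := i.isLt; simp only [Fin.coe_castSucc]; omega⟩ : Fin (k+1)) = i.succ := by
              apply Fin.ext; simp
            rw [hfin]
            simp only [hM, Matrix.of_apply]
            exact choose_sub_choose (q b.castSucc) (hq1 b) (le_of_lt (hp Fin.castSucc_lt_succ))
          rw [hD, det_row_sum]
          apply Finset.sum_nonneg
          intro r hr
          rw [Fintype.mem_piFinset] at hr
          have hrmem : ∀ i : Fin k, p i.succ ≤ r i ∧ r i < p i.castSucc := by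
            intro i; have := hr i; rw [Finset.mem_Ico] at this; exact this
          apply ih k r (fun b => q b.castSucc - 1)
          · intro i i' hii'
            have h3 : i.succ ≤ i'.castSucc := by
              rw [Fin.le_iff_val_le_val]
              simp only [Fin.lt_iff_val_lt_val] at hii'
              simp
              omega
            calc r i' < p i'.castSucc := (hrmem i').2
              _ ≤ p i.succ := hp.antitone h3
              _ ≤ r i := (hrmem i).1
          · intro b b' hbb'
            have := hq (Fin.castSucc_lt_castSucc_iff.mpr hbb')
            have := hq1 b'
            show q b'.castSucc - 1 < q b.castSucc - 1
            omega
          · have hsum : ∑ b : Fin (k+1), q b = ∑ b : Fin k, q b.castSucc + q (Fin.last k) :=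
              Fin.sum_univ_castSucc _
            have hsum2 : ∑ b : Fin k, (q b.castSucc - 1) + k = ∑ b : Fin k, q b.castSucc := by
              have h5 : ∑ b : Fin k, ((q b.castSucc - 1) + 1) = ∑ b : Fin k, q b.castSucc := by
                refine Finset.sum_congr rfl fun b _ => ?_
                have := hq1 b; omega
              rw [Finset.sum_add_distrib] at h5
              simpa using h5
            omega
        · intro a _ ha
          have h0 : M' a (Fin.last k) = 0 := by
            have halt : (a : ℕ) < k := by
              have := a.isLt
              have : (a : ℕ) ≠ k := fun h => ha (Fin.ext (by simp [h]))
              omega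
            simp only [hM', Matrix.of_apply]
            rw [dif_pos halt]
            simp only [hM, Matrix.of_apply]
            rw [hql0]
            simp
          rw [h0]; ring
        · intro h; exact absurd (Finset.mem_univ _) h

/-- **Nonnegativity of Lascoux's binomial determinants** (Lindström–Gessel–Viennot).
For partitions `I = (i_1 ≥ … ≥ i_m ≥ 0)` and `J = (j_1 ≥ … ≥ j_m ≥ 0)` with `J ⊆ I`
(`j_a ≤ i_a` for all `a`), the determinant
`d_{I,J} = det( C(i_a + m − a, j_b + m − b) )_{1 ≤ a,b ≤ m}`
is a nonnegative integer.  (Indices are `0`-based below: `a ↦ a+1`, so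
`i_a + m − a` becomes `I a + (m − 1 − a)`.) -/
theorem binomial_determinant_nonneg (m : ℕ) (I J : Fin m → ℕ)
    (hI : Antitone I) (hJ : Antitone J) (hJI : ∀ a, J a ≤ I a) :
    0 ≤ Matrix.det (Matrix.of fun a b : Fin m =>
      ((I a + (m - 1 - (a : ℕ))).choose (J b + (m - 1 - (b : ℕ))) : ℤ)) := by
  have hp : StrictAnti (fun a : Fin m => I a + (m - 1 - (a : ℕ))) := by
    intro a a' haa'
    have h1 : I a' ≤ I a := hI (le_of_lt haa')
    have h2 : (a : ℕ) < (a' : ℕ) := haa'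
    have h3 : (a' : ℕ) < m := a'.isLt
    show I a' + (m - 1 - (a' : ℕ)) < I a + (m - 1 - (a : ℕ))
    omega
  have hq : StrictAnti (fun b : Fin m => J b + (m - 1 - (b : ℕ))) := by
    intro b b' hbb'
    have h1 : J b' ≤ J b := hJ (le_of_lt hbb')
    have h2 : (b : ℕ) < (b' : ℕ) := hbb'
    have h3 : (b' : ℕ) < m := b'.isLt
    show J b' + (m - 1 - (b' : ℕ)) < J b + (m - 1 - (b : ℕ))
    omega
  exact det_choose_nonneg_key (m + ∑ b, (J b + (m - 1 - (b : ℕ)))) m _ _ hp hq le_rfl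
end

section
/- Let ρ_q = (q, q−1, ..., 1) be the staircase partition. For any partition J contained in ρ_q, the binomial determinant d_{ρ_q, J} = det( C(ρ_q(a) + q − a, j_b + q − b) )_{1 ≤ a,b ≤ q} is strictly positive. -/
set_option autoImplicit false

open Finset Matrix

/-- If `i t < j t` for some `t`, with `i`, `j` monotone, the binomial minor vanishes
(the matrix has a large zero block). -/
lemma pascal_minor_zero {p : ℕ} (i j : Fin p → ℕ) (hi : Monotone i) (hj : Monotone j)
    (t : Fin p) (ht : i t < j t) :
    Matrix.det (Matrix.of fun a b : Fin p => (((i a).choose (j b)) : ℤ)) = 0 := by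
  rw [Matrix.det_apply]
  apply Finset.sum_eq_zero
  intro σ _
  have key : ∃ c : Fin p, t ≤ c ∧ σ c ≤ t := by
    by_contra hcon
    push_neg at hcon
    set S : Finset (Fin p) := univ.filter (fun c => t ≤ c) with hS
    have hmaps : ∀ c ∈ S, σ c ∈ S.erase t := by
      intro c hc
      have htc : t ≤ c := by simpa [hS] using hc
      have h1 : t < σ c := hcon c htc
      exact Finset.mem_erase.2 ⟨(ne_of_lt h1).symm, by simp [hS, le_of_lt h1]⟩
    have hcard : S.card ≤ (S.erase t).card :=
      Finset.card_le_card_of_injOn σ hmaps (fun x _ y _ h => σ.injective h)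
    have htS : t ∈ S := by simp [hS]
    have h1 : (S.erase t).card = S.card - 1 := Finset.card_erase_of_mem htS
    have hpos : 1 ≤ S.card := Finset.card_pos.2 ⟨t, htS⟩
    omega
  obtain ⟨c, htc, hsc⟩ := key
  have hlt : i (σ c) < j c := lt_of_le_of_lt (hi hsc) (lt_of_lt_of_le ht (hj htc))
  have hz : ((Matrix.of fun a b : Fin p => (((i a).choose (j b)) : ℤ)) (σ c) c) = 0 := by
    simp [Nat.choose_eq_zero_of_lt hlt]
  have hprod : ∏ x : Fin p, (Matrix.of fun a b : Fin p => (((i a).choose (j b)) : ℤ)) (σ x) x = 0 :=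
    Finset.prod_eq_zero (Finset.mem_univ c) hz
  rw [hprod]
  simp

/-- Positivity of Pascal-matrix minors: if `i`, `j` are strictly increasing with
`j t ≤ i t` for all `t`, then `det (C(i a, j b)) > 0`. -/
lemma pascal_minor_pos : ∀ (N p : ℕ) (i j : Fin p → ℕ), p + ∑ t, i t ≤ N →
    StrictMono i → StrictMono j → (∀ t, j t ≤ i t) →
    0 < Matrix.det (Matrix.of fun a b : Fin p => (((i a).choose (j b)) : ℤ)) := by
  intro N
  induction N with
  | zero =>
    intro p i j hN _ _ _
    have hp : p = 0 := by omega
    subst hp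
    norm_num [Matrix.det_fin_zero]
  | succ N IH =>
    intro p i j hN hi hj hji
    obtain _ | p := p
    · norm_num [Matrix.det_fin_zero]
    by_cases h0 : i 0 = 0
    · -- first row is e₀; expand along it
      have hj0 : j 0 = 0 := by have := hji 0; omega
      rw [Matrix.det_succ_row_zero]
      have hterm : ∀ b : Fin (p + 1), b ≠ 0 →
          (-1 : ℤ) ^ (b : ℕ) * (Matrix.of fun a b : Fin (p+1) => (((i a).choose (j b)) : ℤ)) 0 b *
            Matrix.det ((Matrix.of fun a b : Fin (p+1) => (((i a).choose (j b)) : ℤ)).submatrix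
              Fin.succ b.succAbove) = 0 := by
        intro b hb
        have hjb : 0 < j b := by
          have : j 0 < j b := hj (Fin.pos_of_ne_zero hb)
          omega
        have hch : (i 0).choose (j b) = 0 := Nat.choose_eq_zero_of_lt (by omega)
        simp [hch]
      rw [Finset.sum_eq_single 0 (fun b _ hb => hterm b hb) (by simp)]
      have hsub : ((Matrix.of fun a b : Fin (p+1) => (((i a).choose (j b)) : ℤ)).submatrix
          Fin.succ (0 : Fin (p+1)).succAbove) =
          Matrix.of fun a b : Fin p => (((i a.succ).choose (j b.succ)) : ℤ) := by
        ext a b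
        simp [Fin.zero_succAbove]
      rw [hsub]
      have hpos : 0 < Matrix.det
          (Matrix.of fun a b : Fin p => (((i a.succ).choose (j b.succ)) : ℤ)) := by
        apply IH p (fun t => i t.succ) (fun t => j t.succ)
        · have hsum : ∑ t : Fin (p+1), i t = i 0 + ∑ t : Fin p, i t.succ := Fin.sum_univ_succ i
          omega
        · exact hi.comp Fin.strictMono_succ
        · exact hj.comp Fin.strictMono_succ
        · intro t; exact hji t.succ
      simpa [h0, hj0] using hpos
    · -- all i a ≥ 1: expand each column by Pascal's rule
      have hi1 : ∀ a : Fin (p+1), 1 ≤ i a := by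
        intro a
        have := hi.monotone (Fin.zero_le a)
        omega
      set u : Fin (p+1) → Fin (p+1) → ℤ := fun b a => ((i a - 1).choose (j b) : ℤ) with hu
      set v : Fin (p+1) → Fin (p+1) → ℤ :=
        fun b a => if j b = 0 then 0 else ((i a - 1).choose (j b - 1) : ℤ) with hv
      have hM : (Matrix.of fun a b : Fin (p+1) => (((i a).choose (j b)) : ℤ))ᵀ = u + v := by
        funext b a
        have hia : i a = (i a - 1) + 1 := by have := hi1 a; omega
        rcases Nat.eq_zero_or_pos (j b) with hjb | hjb
        · simp [Matrix.transpose_apply, hu, hv, hjb]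
        · have hps : (i a).choose (j b) = (i a - 1).choose (j b - 1) + (i a - 1).choose (j b) := by
            obtain ⟨m, hm⟩ : ∃ m, i a = m + 1 := ⟨i a - 1, by omega⟩
            obtain ⟨k, hk⟩ : ∃ k, j b = k + 1 := ⟨j b - 1, by omega⟩
            rw [hm, hk]
            simp [Nat.choose_succ_succ]
          simp only [Matrix.transpose_apply, Matrix.of_apply, Pi.add_apply, hu, hv,
            if_neg (by omega : ¬ j b = 0)]
          rw [hps]
          push_cast
          ring
      rw [← Matrix.det_transpose, hM]
      have hdet : Matrix.det (u + v) =
          ∑ S : Finset (Fin (p+1)), Matrix.det (S.piecewise u v) :=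
        (Matrix.detRowAlternating :
          (Fin (p+1) → ℤ) [⋀^Fin (p+1)]→ₗ[ℤ] ℤ).toMultilinearMap.map_add_univ u v
      rw [hdet]
      -- each (guard-free) term is a standard binomial minor
      have hterm : ∀ S : Finset (Fin (p+1)),
          (∀ b, b ∉ S → 1 ≤ j b) →
          Matrix.det (S.piecewise u v) =
            Matrix.det (Matrix.of fun a b : Fin (p+1) =>
              (((i a - 1).choose (if b ∈ S then j b else j b - 1)) : ℤ)) := by
        intro S hS
        rw [← Matrix.det_transpose (Matrix.of fun a b : Fin (p+1) =>
              (((i a - 1).choose (if b ∈ S then j b else j b - 1)) : ℤ))]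
        congr 1
        funext b a
        by_cases hb : b ∈ S
        · rw [Finset.piecewise_eq_of_mem _ _ _ hb]
          simp [hu, hb]
        · rw [Finset.piecewise_eq_of_notMem _ _ _ hb]
          simp [hv, hb, if_neg (by have := hS b hb; omega : ¬ j b = 0)]
      have hsum1 : (∑ t : Fin (p+1), (i t - 1)) + (p+1) = ∑ t : Fin (p+1), i t := by
        have h1 : ∑ t : Fin (p+1), ((i t - 1) + 1) = ∑ t : Fin (p+1), i t :=
          Finset.sum_congr rfl (fun t _ => by have := hi1 t; omega)
        rw [Finset.sum_add_distrib] at h1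
        simpa using h1
      have himono : Monotone (fun a : Fin (p+1) => i a - 1) := by
        intro a b hab
        have := hi.monotone hab
        simp only []
        omega
      have hismono : StrictMono (fun a : Fin (p+1) => i a - 1) := by
        intro a b hab
        have h2 := hi hab
        have h3 := hi1 a
        simp only []
        omega
      -- analysis of one (guard-free) term
      have hanalysis : ∀ S : Finset (Fin (p+1)), (∀ b, b ∉ S → 1 ≤ j b) →
          0 ≤ Matrix.det (S.piecewise u v) ∧
          ((∀ b₁ b₂ : Fin (p+1), b₁ < b₂ →
              (if b₁ ∈ S then j b₁ else j b₁ - 1) < (if b₂ ∈ S then j b₂ else j b₂ - 1)) →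
           (∀ t, (if t ∈ S then j t else j t - 1) ≤ i t - 1) →
           0 < Matrix.det (S.piecewise u v)) := by
        intro S hz'
        rw [hterm S hz']
        have hmono : Monotone (fun b : Fin (p+1) => if b ∈ S then j b else j b - 1) := by
          intro b₁ b₂ hb
          rcases eq_or_lt_of_le hb with rfl | hlt
          · exact le_refl _
          · have h1 : j b₁ < j b₂ := hj hlt
            simp only []
            split <;> split <;> omega
        constructor
        · by_cases hinj : Function.Injective (fun b : Fin (p+1) => if b ∈ S then j b else j b - 1)
          · have hsm : StrictMono (fun b : Fin (p+1) => if b ∈ S then j b else j b - 1) :=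
              hmono.strictMono_of_injective hinj
            by_cases hcond : ∀ t : Fin (p+1),
                (if t ∈ S then j t else j t - 1) ≤ i t - 1
            · apply le_of_lt
              apply IH (p+1) (fun a => i a - 1) (fun b => if b ∈ S then j b else j b - 1)
              · show p + 1 + ∑ t : Fin (p+1), (i t - 1) ≤ N
                omega
              · exact hismono
              · exact hsm
              · exact hcond
            · push_neg at hcond
              obtain ⟨t, ht⟩ := hcond
              exact le_of_eq (pascal_minor_zero (fun a => i a - 1)
                (fun b => if b ∈ S then j b else j b - 1) himono hmono t ht).symm
          · rw [Function.not_injective_iff] at hinj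
            obtain ⟨b₁, b₂, heq, hne⟩ := hinj
            have heq' : (if b₁ ∈ S then j b₁ else j b₁ - 1) =
                (if b₂ ∈ S then j b₂ else j b₂ - 1) := heq
            have hzero : Matrix.det (Matrix.of fun a b : Fin (p+1) =>
                (((i a - 1).choose (if b ∈ S then j b else j b - 1)) : ℤ)) = 0 := by
              apply Matrix.det_zero_of_column_eq hne
              intro a
              simp only [Matrix.of_apply]
              rw [heq']
            exact le_of_eq hzero.symm
        · intro hsm hcond
          apply IH (p+1) (fun a => i a - 1) (fun b => if b ∈ S then j b else j b - 1)
          · show p + 1 + ∑ t : Fin (p+1), (i t - 1) ≤ N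
            omega
          · exact hismono
          · intro b₁ b₂ hb
            exact hsm b₁ b₂ hb
          · exact hcond
      -- the witness subset: keep column b exactly when j b < i b
      have hwit : 0 < Matrix.det ((univ.filter (fun b : Fin (p+1) => j b < i b)).piecewise u v) := by
        have hguard : ∀ b, b ∉ univ.filter (fun b : Fin (p+1) => j b < i b) → 1 ≤ j b := by
          intro b hb
          simp only [Finset.mem_filter, Finset.mem_univ, true_and] at hb
          have h1 := hji b
          have h2 := hi1 b
          omega
        apply (hanalysis _ hguard).2
        · intro b₁ b₂ hb
          have h1 : j b₁ < j b₂ := hj hb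
          have h2 : i b₁ < i b₂ := hi hb
          have h3 := hji b₁
          have h4 := hji b₂
          have h5 := hi1 b₁
          have h6 := hi1 b₂
          by_cases c1 : b₁ ∈ univ.filter (fun b : Fin (p+1) => j b < i b) <;>
            by_cases c2 : b₂ ∈ univ.filter (fun b : Fin (p+1) => j b < i b) <;>
            simp only [Finset.mem_filter, Finset.mem_univ, true_and] at c1 c2
          · rw [if_pos (by simpa using c1), if_pos (by simpa using c2)]; omega
          · rw [if_pos (by simpa using c1), if_neg (by simpa using c2)]; omega
          · rw [if_neg (by simpa using c1), if_pos (by simpa using c2)]; omega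
          · rw [if_neg (by simpa using c1), if_neg (by simpa using c2)]; omega
        · intro t
          have h1 := hji t
          have h2 := hi1 t
          by_cases c : t ∈ univ.filter (fun b : Fin (p+1) => j b < i b) <;>
            simp only [Finset.mem_filter, Finset.mem_univ, true_and] at c
          · rw [if_pos (by simpa using c)]; omega
          · rw [if_neg (by simpa using c)]; omega
      apply Finset.sum_pos'
      · intro S _
        by_cases hz : ∃ b, b ∉ S ∧ j b = 0
        · obtain ⟨b, hbS, hjb⟩ := hz
          have hzero : Matrix.det (S.piecewise u v) = 0 := by
            apply Matrix.det_eq_zero_of_row_eq_zero b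
            intro a
            rw [Finset.piecewise_eq_of_notMem _ _ _ hbS]
            simp [hv, hjb]
          exact le_of_eq hzero.symm
        · push_neg at hz
          exact (hanalysis S (fun b hb => by have := hz b hb; omega)).1
      · exact ⟨_, Finset.mem_univ _, hwit⟩

/-- **Positivity of the staircase binomial determinants.**  Let `ρ_q = (q, q−1, …, 1)`
be the staircase partition.  For any partition `J = (j_1 ≥ … ≥ j_q ≥ 0)` contained in
`ρ_q` (i.e. `j_a ≤ q + 1 − a`, in `0`-based indexing `J a ≤ q − a`), the binomial
determinant `d_{ρ_q, J} = det( C(ρ_q(a) + q − a, j_b + q − b) )_{1 ≤ a,b ≤ q}` is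
strictly positive.  (In `0`-based indexing `ρ_q(a) + q − a = (q − a) + (q − 1 − a)`
and `j_b + q − b = J b + (q − 1 − b)`.) -/
theorem staircase_binomial_determinant_pos (q : ℕ) (J : Fin q → ℕ)
    (hJ : Antitone J) (hJρ : ∀ a : Fin q, J a ≤ q - (a : ℕ)) :
    0 < Matrix.det (Matrix.of fun a b : Fin q =>
      (((q - (a : ℕ)) + (q - 1 - (a : ℕ))).choose (J b + (q - 1 - (b : ℕ))) : ℤ)) := by
  have key := pascal_minor_pos (q + ∑ t : Fin q, (2 * (t : ℕ) + 1)) q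
    (fun t => 2 * (t : ℕ) + 1) (fun t => J t.rev + (t : ℕ)) (le_refl _)
    (fun a b hab => by
      have h : (a : ℕ) < (b : ℕ) := hab
      simp only []
      omega)
    (fun a b hab => by
      have h1 : J a.rev ≤ J b.rev := hJ (Fin.rev_le_rev.mpr (le_of_lt hab))
      have h2 : (a : ℕ) < (b : ℕ) := hab
      simp only []
      omega)
    (fun t => by
      have h1 := hJρ t.rev
      have h2 : ((t.rev : ℕ)) = q - ((t : ℕ) + 1) := Fin.val_rev t
      have h3 : (t : ℕ) < q := t.isLt
      omega)
  rw [← Matrix.det_submatrix_equiv_self (Fin.revPerm) (Matrix.of fun a b : Fin q =>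
      (((q - (a : ℕ)) + (q - 1 - (a : ℕ))).choose (J b + (q - 1 - (b : ℕ))) : ℤ))]
  have heq : ((Matrix.of fun a b : Fin q =>
      (((q - (a : ℕ)) + (q - 1 - (a : ℕ))).choose (J b + (q - 1 - (b : ℕ))) : ℤ)).submatrix
        Fin.revPerm Fin.revPerm) =
      Matrix.of fun a b : Fin q => (((2 * (a : ℕ) + 1).choose (J b.rev + (b : ℕ))) : ℤ) := by
    ext a b
    have h1 : ((a.rev : ℕ)) = q - ((a : ℕ) + 1) := Fin.val_rev a
    have h2 : ((b.rev : ℕ)) = q - ((b : ℕ) + 1) := Fin.val_rev b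
    have h3 : (a : ℕ) < q := a.isLt
    have h4 : (b : ℕ) < q := b.isLt
    simp only [Matrix.submatrix_apply, Matrix.of_apply, Fin.revPerm_apply]
    have e1 : q - (a.rev : ℕ) + (q - 1 - (a.rev : ℕ)) = 2 * (a : ℕ) + 1 := by omega
    have e2 : J b.rev + (q - 1 - (b.rev : ℕ)) = J b.rev + (b : ℕ) := by omega
    rw [e1, e2]
  rw [heq]
  exact key
end

section
/- The number of semistandard Young tableaux of shape I with entries in {1,...,n} equals the product Π_{(p,q) ∈ I} (n + q − p) / h(p,q), where h(p,q) is the hook length of the cell (p,q); equivalently, s_I(1,1,...,1) (n ones) equals this product. In particular s_I(1,...,1) > 0 whenever I has at most n parts. -/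
set_option autoImplicit false

open MvPolynomial

noncomputable def ssytFinset (n : ℕ) (μ : YoungDiagram) :
    Finset ({c // c ∈ μ.cells} → Fin n) :=
  Finset.univ.filter fun T =>
    (∀ c d : {c // c ∈ μ.cells}, c.1.1 = d.1.1 → c.1.2 ≤ d.1.2 → T c ≤ T d) ∧
    (∀ c d : {c // c ∈ μ.cells}, c.1.2 = d.1.2 → c.1.1 < d.1.1 → T c < T d)

/-- The Schur polynomial of shape `μ` in `n` variables. -/
noncomputable def schurPoly (n : ℕ) (μ : YoungDiagram) : MvPolynomial (Fin n) ℤ :=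
  ∑ T ∈ ssytFinset n μ, ∏ c : {c // c ∈ μ.cells}, X (T c)

set_option maxHeartbeats 1600000
open Finset Matrix

lemma mem_ssytFinset {n : ℕ} {μ : YoungDiagram} {T : {c // c ∈ μ.cells} → Fin n} :
    T ∈ ssytFinset n μ ↔
    (∀ c d : {c // c ∈ μ.cells}, c.1.1 = d.1.1 → c.1.2 ≤ d.1.2 → T c ≤ T d) ∧
    (∀ c d : {c // c ∈ μ.cells}, c.1.2 = d.1.2 → c.1.1 < d.1.1 → T c < T d) := by
  simp [ssytFinset]

lemma eval_one_schurPoly (n : ℕ) (μ : YoungDiagram) :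
    eval (fun _ => (1 : ℤ)) (schurPoly n μ) = ((ssytFinset n μ).card : ℤ) := by
  simp [schurPoly]

lemma ssyt_nonempty {n : ℕ} {μ : YoungDiagram} (h : μ.colLen 0 ≤ n) :
    0 < (ssytFinset n μ).card := by
  refine Finset.card_pos.mpr ⟨fun c => ⟨c.1.1, ?_⟩, ?_⟩
  · exact lt_of_lt_of_le (lt_of_lt_of_le ((YoungDiagram.mem_iff_lt_colLen).mp
      (by simpa using c.2)) (μ.colLen_anti 0 c.1.2 (Nat.zero_le _))) h
  · rw [mem_ssytFinset]
    constructor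
    · intro c d hcd _; simp [Fin.le_def, hcd]
    · intro c d _ hcd; simpa [Fin.lt_def] using hcd

lemma ssyt_card_zero {n : ℕ} {μ : YoungDiagram} (h : n < μ.colLen 0) :
    (ssytFinset n μ).card = 0 := by
  rw [Finset.card_eq_zero, Finset.eq_empty_iff_forall_notMem]
  intro T hT
  rw [mem_ssytFinset] at hT
  have hmem : ∀ i : Fin (n+1), ((i : ℕ), 0) ∈ μ.cells := by
    intro i
    rw [YoungDiagram.mem_cells, YoungDiagram.mem_iff_lt_colLen]
    exact lt_of_lt_of_le i.2 h
  have hsm : StrictMono (fun i : Fin (n+1) => T ⟨((i : ℕ), 0), hmem i⟩) := by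
    intro a b hab
    exact hT.2 _ _ rfl (by simpa using hab)
  have := Fintype.card_le_of_injective _ hsm.injective
  simpa using this


def hookl (μ : YoungDiagram) (i q : ℕ) : ℕ := (μ.rowLen i - q) + (μ.colLen q - i) - 1
def mfun (n : ℕ) (μ : YoungDiagram) (i : ℕ) : ℕ := μ.rowLen i + (n - 1 - i)

lemma rowLen_lt_iff (μ : YoungDiagram) (j q : ℕ) : q < μ.rowLen j ↔ j < μ.colLen q := by
  rw [← YoungDiagram.mem_iff_lt_rowLen, YoungDiagram.mem_iff_lt_colLen]

lemma mfun_strictanti {n : ℕ} (μ : YoungDiagram) {a b : ℕ} (hab : a < b) (hb : b < n) :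
    mfun n μ b < mfun n μ a := by
  have := μ.rowLen_anti a b (le_of_lt hab)
  unfold mfun; omega

lemma row_hook_lemma {n : ℕ} (μ : YoungDiagram) (hn : μ.colLen 0 ≤ n) (i : Fin n) :
    (∏ q ∈ range (μ.rowLen (i : ℕ)), hookl μ i q) *
      (∏ j ∈ Ioi i, (mfun n μ i - mfun n μ (j : ℕ))) = Nat.factorial (mfun n μ i) := by
  have hcoll : ∀ q : ℕ, μ.colLen q ≤ n := fun q => le_trans (μ.colLen_anti 0 q (Nat.zero_le _)) hn
  have hcolg : ∀ q, q < μ.rowLen (i:ℕ) → (i:ℕ) < μ.colLen q := fun q hq => (rowLen_lt_iff μ _ _).mp hq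
  -- the two images
  set A : Finset ℕ := (Ioi i).image (fun j : Fin n => mfun n μ i - mfun n μ (j : ℕ)) with hA
  set B : Finset ℕ := (range (μ.rowLen (i:ℕ))).image (hookl μ i) with hB
  have hAinj : ∀ x ∈ Ioi i, ∀ y ∈ Ioi i,
      mfun n μ i - mfun n μ (x:ℕ) = mfun n μ i - mfun n μ (y:ℕ) → x = y := by
    intro x hx y hy hxy
    rw [mem_Ioi] at hx hy
    have hxm := mfun_strictanti μ (show (i:ℕ) < x from hx) x.2
    have hym := mfun_strictanti μ (show (i:ℕ) < y from hy) y.2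
    rcases lt_trichotomy x y with h | h | h
    · have := mfun_strictanti μ (show (x:ℕ) < y from h) y.2; omega
    · exact h
    · have := mfun_strictanti μ (show (y:ℕ) < x from h) x.2; omega
  have hBinj : ∀ x ∈ range (μ.rowLen (i:ℕ)), ∀ y ∈ range (μ.rowLen (i:ℕ)),
      hookl μ i x = hookl μ i y → x = y := by
    intro x hx y hy hxy
    rw [mem_range] at hx hy
    rcases lt_trichotomy x y with h | h | h
    · have h1 := μ.colLen_anti x y (le_of_lt h)
      have h2 := hcolg x hx; have h3 := hcolg y hy
      unfold hookl at hxy; omega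
    · exact h
    · have h1 := μ.colLen_anti y x (le_of_lt h)
      have h2 := hcolg x hx; have h3 := hcolg y hy
      unfold hookl at hxy; omega
  have hdisj : Disjoint A B := by
    rw [Finset.disjoint_left]
    rintro a ha hb
    rw [hA, Finset.mem_image] at ha
    rw [hB, Finset.mem_image] at hb
    obtain ⟨j, hj, rfl⟩ := ha
    obtain ⟨q, hq, heq⟩ := hb
    rw [mem_Ioi] at hj; rw [mem_range] at hq
    have hj2 : (j:ℕ) < n := j.2
    have hij : (i:ℕ) < (j:ℕ) := hj
    have h1 := μ.rowLen_anti i j (le_of_lt hij)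
    have h2 := hcolg q hq
    have h3 := hcoll q
    have h4 := rowLen_lt_iff μ (j:ℕ) q
    unfold hookl mfun at heq
    have hi2 : (i:ℕ) < n := i.2
    omega
  have hAcard : A.card = n - 1 - (i:ℕ) := by
    rw [hA, Finset.card_image_of_injOn hAinj, Fin.card_Ioi]
  have hBcard : B.card = μ.rowLen (i:ℕ) := by
    rw [hB, Finset.card_image_of_injOn hBinj, card_range]
  have hsub : A ∪ B ⊆ Icc 1 (mfun n μ i) := by
    intro a ha
    rw [Finset.mem_union] at ha
    rw [mem_Icc]
    rcases ha with ha | ha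
    · rw [hA, Finset.mem_image] at ha
      obtain ⟨j, hj, rfl⟩ := ha
      rw [mem_Ioi] at hj
      have := mfun_strictanti μ (show (i:ℕ) < (j:ℕ) from hj) j.2
      omega
    · rw [hB, Finset.mem_image] at ha
      obtain ⟨q, hq, rfl⟩ := ha
      rw [mem_range] at hq
      have h2 := hcolg q hq
      have h3 := hcoll q
      have hi2 : (i:ℕ) < n := i.2
      unfold hookl mfun; omega
  have huni : A ∪ B = Icc 1 (mfun n μ i) := by
    apply Finset.eq_of_subset_of_card_le hsub
    rw [Nat.card_Icc, Finset.card_union_of_disjoint hdisj, hAcard, hBcard]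
    have hi2 : (i:ℕ) < n := i.2
    unfold mfun; omega
  have hprod : (∏ x ∈ A, x) * (∏ x ∈ B, x) = Nat.factorial (mfun n μ i) := by
    rw [← Finset.prod_union hdisj, huni]
    rw [show Icc 1 (mfun n μ (i:ℕ)) = Ico 1 (mfun n μ (i:ℕ) + 1) from rfl]
    rw [Finset.prod_Ico_eq_prod_range]
    simp only [Nat.add_sub_cancel]
    rw [← Finset.prod_range_add_one_eq_factorial]
    exact Finset.prod_congr rfl (fun x _ => by omega)
  rw [hA, hB] at hprod
  rw [Finset.prod_image hAinj, Finset.prod_image hBinj] at hprod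
  rw [mul_comm] at hprod
  exact hprod


lemma hockey (k a b : ℕ) (h : a ≤ b) :
    ∑ x ∈ Ico a b, ((x.choose k : ℤ)) = (b.choose (k+1) : ℤ) - (a.choose (k+1) : ℤ) := by
  induction b, h using Nat.le_induction with
  | base => simp
  | succ b hab ih =>
    rw [Finset.sum_Ico_succ_top hab, ih]
    have : (b+1).choose (k+1) = b.choose k + b.choose (k+1) := Nat.choose_succ_succ _ _
    push_cast [this]
    ring

lemma prod_Ioi_neg (k : ℕ) (v : Fin k → ℕ) :
    ∏ i : Fin k, ∏ j ∈ Ioi i, ((v i : ℤ) - v j)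
      = (-1)^(∑ i : Fin k, (k - 1 - (i:ℕ))) *
        (Matrix.vandermonde (fun i : Fin k => (v i : ℤ))).det := by
  rw [Matrix.det_vandermonde]
  rw [← Finset.prod_pow_eq_pow_sum, ← Finset.prod_mul_distrib]
  refine Finset.prod_congr rfl fun i _ => ?_
  rw [← Fin.card_Ioi i, ← Finset.prod_const, ← Finset.prod_mul_distrib]
  exact Finset.prod_congr rfl fun j _ => by ring

lemma vand_choose (k : ℕ) (v : Fin k → ℕ) :
    (Matrix.vandermonde (fun i : Fin k => (v i : ℤ))).det
      = (∏ i : Fin k, ((i:ℕ).factorial : ℤ)) *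
        (Matrix.of fun i j : Fin k => (((v i).choose (j:ℕ) : ℕ) : ℤ)).det := by
  rw [Matrix.det_eval_matrixOfPolynomials_eq_det_vandermonde (fun i => ((v i : ℤ)))
    (fun i => descPochhammer ℤ i) (fun i => descPochhammer_natDegree ℤ i)
    (fun i => monic_descPochhammer ℤ i)]
  have h : (Matrix.of fun (i j : Fin k) => (descPochhammer ℤ (j:ℕ)).eval ((v i : ℤ)))
      = Matrix.of fun (i j : Fin k) => (((j:ℕ).factorial : ℤ)) * (((v i).choose (j:ℕ) : ℕ) : ℤ) := by
    ext i j
    simp only [Matrix.of_apply]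
    rw [descPochhammer_eval_eq_descFactorial, Nat.descFactorial_eq_factorial_mul_choose]
    push_cast; ring
  rw [h]
  exact Matrix.det_mul_row (fun j : Fin k => (((j:ℕ).factorial : ℕ) : ℤ))
    (Matrix.of fun i j : Fin k => (((v i).choose (j:ℕ) : ℕ) : ℤ))

lemma hexp_lemma (n : ℕ) :
    (∑ i : Fin (n+1), (n + 1 - 1 - (i:ℕ))) = n + ∑ i : Fin n, (n - 1 - (i:ℕ)) := by
  have h2 : ∑ i : Fin n, (n + 1 - 1 - ((i.succ : Fin (n+1)):ℕ))
      = ∑ i : Fin n, (n - 1 - (i:ℕ)) :=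
    Finset.sum_congr rfl (fun i _ => by rw [Fin.val_succ]; omega)
  rw [Fin.sum_univ_succ, h2]
  simp only [Fin.val_zero]
  omega

lemma alg (n : ℕ) (m : Fin (n+1) → ℕ) (hm : ∀ i : Fin n, m i.succ ≤ m i.castSucc) :
    (∏ i : Fin (n+1), ∏ j ∈ Ioi i, ((m i : ℤ) - m j))
      = ((n.factorial : ℕ) : ℤ) *
        ∑ l ∈ Fintype.piFinset (fun i : Fin n => Finset.Ico (m i.succ) (m i.castSucc)),
          ∏ i : Fin n, ∏ j ∈ Ioi i, ((l i : ℤ) - l j) := by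
  classical
  set A : Matrix (Fin (n+1)) (Fin (n+1)) ℤ :=
    Matrix.of fun i j => (((m i).choose (j:ℕ) : ℕ) : ℤ) with hA
  set B : Matrix (Fin n) (Fin n) ℤ :=
    Matrix.of fun i j => ((((m i.castSucc).choose ((j:ℕ)+1) : ℕ) : ℤ)
      - (((m i.succ).choose ((j:ℕ)+1) : ℕ) : ℤ)) with hB
  set D : ℕ → Matrix (Fin (n+1)) (Fin (n+1)) ℤ :=
    fun k => Matrix.of fun i j =>
      if (i:ℕ) < k then A i j - A ⟨min ((i:ℕ)+1) n, by omega⟩ j else A i j with hD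
  have hD0 : D 0 = A := by
    ext i j; simp [hD]
  have hstep : ∀ k (hk : k < n), D (k+1) =
      updateRow (D k) ⟨k, by omega⟩
        ((D k) ⟨k, by omega⟩ + (-1:ℤ) • (D k) ⟨k+1, by omega⟩) := by
    intro k hk
    have hDapp : ∀ k' (i : Fin (n+1)) j (h : (i:ℕ) < k'),
        D k' i j = A i j - A ⟨min ((i:ℕ)+1) n, by omega⟩ j := by
      intro k' i j h
      simp only [hD, Matrix.of_apply, if_pos h]
    have hDapp' : ∀ k' (i : Fin (n+1)) j (h : ¬ ((i:ℕ) < k')),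
        D k' i j = A i j := by
      intro k' i j h
      simp only [hD, Matrix.of_apply, if_neg h]
    ext i j
    rcases eq_or_ne i ⟨k, by omega⟩ with rfl | hik
    · rw [Matrix.updateRow_self]
      rw [hDapp (k+1) ⟨k, by omega⟩ j (Nat.lt_succ_self k)]
      simp only [Pi.add_apply, Pi.smul_apply, smul_eq_mul]
      rw [hDapp' k ⟨k, by omega⟩ j (lt_irrefl k), hDapp' k ⟨k+1, by omega⟩ j Nat.not_succ_lt_self]
      have hmin : (⟨min (k+1) n, by omega⟩ : Fin (n+1)) = ⟨k+1, by omega⟩ :=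
        Fin.ext (show min (k+1) n = k+1 by omega)
      rw [hmin]
      ring
    · rw [Matrix.updateRow_ne hik]
      have hvk : (i : ℕ) ≠ k := fun h => hik (Fin.ext h)
      by_cases h : (i:ℕ) < k
      · rw [hDapp (k+1) i j (by omega), hDapp k i j h]
      · rw [hDapp' (k+1) i j (by omega), hDapp' k i j h]
  have hdet : ∀ k, k ≤ n → (D k).det = A.det := by
    intro k
    induction k with
    | zero => intro _; rw [hD0]
    | succ k ih =>
      intro hk
      rw [hstep k (by omega), Matrix.det_updateRow_add_smul_self _
        (show (⟨k, by omega⟩ : Fin (n+1)) ≠ ⟨k+1, by omega⟩ by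
          simp [Fin.ext_iff]) (-1:ℤ)]
      exact ih (by omega)
  have hAB : A.det = (-1:ℤ)^n * B.det := by
    rw [← hdet n le_rfl, Matrix.det_succ_column_zero]
    rw [Finset.sum_eq_single_of_mem (Fin.last n) (Finset.mem_univ _)]
    · have h1 : (D n) (Fin.last n) 0 = 1 := by
        simp [hD, hA, Fin.last]
      have h2 : (D n).submatrix (Fin.last n).succAbove Fin.succ = B := by
        ext i j
        rw [Matrix.submatrix_apply, Fin.succAbove_last]
        have hilt : ((i.castSucc : Fin (n+1)) : ℕ) < n := i.2
        simp only [hD, Matrix.of_apply, if_pos hilt]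
        have hmin : (⟨min (((i.castSucc : Fin (n+1)) :ℕ)+1) n, by omega⟩ : Fin (n+1)) = i.succ := by
          apply Fin.ext
          simp [Fin.val_succ]
        rw [hmin]
        simp [hA, hB]
      rw [h1, h2]
      simp [Fin.val_last]
    · intro i _ hine
      have hilt : (i:ℕ) < n := by
        rcases Fin.lt_or_eq_of_le (Fin.le_last i) with h | h
        · exact h
        · exact absurd h hine
      have hz : (D n) i 0 = 0 := by
        simp only [hD, Matrix.of_apply, if_pos hilt, hA]
        simp
      rw [hz]; ring
  -- Step 2: sum of determinants
  have hsum : ∑ l ∈ Fintype.piFinset (fun i : Fin n => Finset.Ico (m i.succ) (m i.castSucc)),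
      (Matrix.of fun i j : Fin n => (((l i).choose (j:ℕ) : ℕ) : ℤ)).det = B.det := by
    have hms := (Matrix.detRowAlternating : (Fin n → ℤ) [⋀^Fin n]→ₗ[ℤ] ℤ).toMultilinearMap.map_sum_finset
      (fun i x => fun j : Fin n => ((x.choose (j:ℕ) : ℕ) : ℤ))
      (fun i : Fin n => Finset.Ico (m i.succ) (m i.castSucc))
    have hrows : (fun i : Fin n => ∑ x ∈ Finset.Ico (m i.succ) (m i.castSucc),
        (fun j : Fin n => ((x.choose (j:ℕ) : ℕ) : ℤ))) = fun i => B i := by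
      funext i
      funext j
      rw [Finset.sum_apply]
      exact hockey (j:ℕ) _ _ (hm i)
    calc ∑ l ∈ Fintype.piFinset (fun i : Fin n => Finset.Ico (m i.succ) (m i.castSucc)),
          (Matrix.of fun i j : Fin n => (((l i).choose (j:ℕ) : ℕ) : ℤ)).det
        = ∑ l ∈ Fintype.piFinset (fun i : Fin n => Finset.Ico (m i.succ) (m i.castSucc)),
          (Matrix.detRowAlternating : (Fin n → ℤ) [⋀^Fin n]→ₗ[ℤ] ℤ)
            (fun i => (fun j : Fin n => (((l i).choose (j:ℕ) : ℕ) : ℤ))) := rfl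
      _ = (Matrix.detRowAlternating : (Fin n → ℤ) [⋀^Fin n]→ₗ[ℤ] ℤ)
            (fun i => ∑ x ∈ Finset.Ico (m i.succ) (m i.castSucc),
              (fun j : Fin n => ((x.choose (j:ℕ) : ℕ) : ℤ))) := hms.symm
      _ = B.det := by rw [hrows]; rfl
  -- Step 3: assemble
  rw [prod_Ioi_neg (n+1) m, vand_choose (n+1) m]
  have hrs : ∀ l : Fin n → ℕ, ∏ i : Fin n, ∏ j ∈ Ioi i, ((l i : ℤ) - l j)
      = (-1)^(∑ i : Fin n, (n - 1 - (i:ℕ))) * ((∏ i : Fin n, ((i:ℕ).factorial : ℤ)) *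
          (Matrix.of fun i j : Fin n => (((l i).choose (j:ℕ) : ℕ) : ℤ)).det) := by
    intro l
    rw [prod_Ioi_neg n l, vand_choose n l]
  have hsum2 : ∑ l ∈ Fintype.piFinset (fun i : Fin n => Finset.Ico (m i.succ) (m i.castSucc)),
      ∏ i : Fin n, ∏ j ∈ Ioi i, ((l i : ℤ) - l j)
      = (-1)^(∑ i : Fin n, (n - 1 - (i:ℕ))) * ((∏ i : Fin n, ((i:ℕ).factorial : ℤ)) * B.det) := by
    rw [Finset.sum_congr rfl (fun l _ => hrs l), ← Finset.mul_sum, ← Finset.mul_sum, hsum]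
  rw [hsum2]
  rw [show A.det = (-1:ℤ)^n * B.det from hAB]
  have hfac : (∏ i : Fin (n+1), ((i:ℕ).factorial : ℤ))
      = ((n.factorial : ℕ) : ℤ) * ∏ i : Fin n, ((i:ℕ).factorial : ℤ) := by
    rw [Fin.prod_univ_castSucc]
    simp [mul_comm]
  have hexp := hexp_lemma n
  rw [hfac, hexp, pow_add]
  have hsq : (-1:ℤ)^n * (-1:ℤ)^n = 1 := by
    rw [← pow_add, show n + n = 2 * n by ring, pow_mul]
    norm_num
  linear_combination (((-1:ℤ)^(∑ i : Fin n, (n - 1 - (i:ℕ))) * ((n.factorial : ℕ) : ℤ) *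
    (∏ i : Fin n, ((i:ℕ).factorial : ℤ)) * B.det)) * hsq


def prof {n : ℕ} {μ : YoungDiagram} (T : {c // c ∈ μ.cells} → Fin (n+1)) (i : ℕ) : ℕ :=
  (μ.cells.attach.filter (fun c => c.1.1 = i ∧ (T c : ℕ) < n)).card

lemma dc_range (S : Finset ℕ) (h : ∀ a b : ℕ, a ≤ b → b ∈ S → a ∈ S) : S = range S.card := by
  have hsub : S ⊆ range S.card := by
    intro b hb
    rw [mem_range]
    have hss : Icc 0 b ⊆ S := fun a ha => h a b (by simp at ha; omega) hb
    have := Finset.card_le_card hss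
    rw [Nat.card_Icc] at this
    omega
  exact Finset.eq_of_subset_of_card_le hsub (by rw [card_range])

lemma seg {n : ℕ} {μ : YoungDiagram} {T : {c // c ∈ μ.cells} → Fin (n+1)}
    (hT : T ∈ ssytFinset (n+1) μ) (i : ℕ) (c : {c // c ∈ μ.cells}) (hci : c.1.1 = i) :
    ((T c : ℕ) < n ↔ c.1.2 < prof T i) := by
  rw [mem_ssytFinset] at hT
  classical
  set F := μ.cells.attach.filter (fun c => c.1.1 = i ∧ (T c : ℕ) < n) with hF
  set Q := F.image (fun c => c.1.2) with hQ
  have hinj : ∀ x ∈ F, ∀ y ∈ F, x.1.2 = y.1.2 → x = y := by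
    intro x hx y hy hxy
    rw [hF, Finset.mem_filter] at hx hy
    exact Subtype.ext (Prod.ext (hx.2.1.trans hy.2.1.symm) hxy)
  have hQcard : Q.card = prof T i := by
    rw [hQ, Finset.card_image_of_injOn hinj]
    rfl
  have hdc : Q = range (prof T i) := by
    rw [← hQcard]
    apply dc_range
    intro a b hab hb
    rw [hQ, Finset.mem_image] at hb ⊢
    obtain ⟨d, hd, rfl⟩ := hb
    rw [hF, Finset.mem_filter] at hd
    have hmem : ((i, a) : ℕ × ℕ) ∈ μ.cells := by
      rw [YoungDiagram.mem_cells]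
      exact μ.up_left_mem (le_of_eq hd.2.1.symm) hab ((YoungDiagram.mem_cells _).mp d.2)
    refine ⟨⟨(i, a), hmem⟩, ?_, rfl⟩
    rw [hF, Finset.mem_filter]
    refine ⟨Finset.mem_attach _ _, rfl, ?_⟩
    have hle := hT.1 ⟨(i, a), hmem⟩ d (by simp [hd.2.1]) (by simpa using hab)
    have := hd.2.2
    rw [Fin.le_def] at hle
    omega
  constructor
  · intro hlt
    have hcF : c ∈ F := by
      rw [hF, Finset.mem_filter]
      exact ⟨Finset.mem_attach _ _, hci, hlt⟩
    have : c.1.2 ∈ Q := Finset.mem_image_of_mem _ hcF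
    rw [hdc, mem_range] at this
    exact this
  · intro hlt
    have : c.1.2 ∈ Q := by rw [hdc, mem_range]; exact hlt
    rw [hQ, Finset.mem_image] at this
    obtain ⟨d, hd, hdc2⟩ := this
    have hmemF := hd
    rw [hF, Finset.mem_filter] at hd
    have : d = c := Subtype.ext (Prod.ext (hd.2.1.trans hci.symm) hdc2)
    rw [← this]
    exact hd.2.2

lemma prof_mem_Icc {n : ℕ} {μ : YoungDiagram} {T : {c // c ∈ μ.cells} → Fin (n+1)}
    (hT : T ∈ ssytFinset (n+1) μ) (i : Fin n) :
    prof T (i:ℕ) ∈ Icc (μ.rowLen ((i:ℕ)+1)) (μ.rowLen (i:ℕ)) := by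
  rw [mem_Icc]
  constructor
  · -- lower bound
    rcases Nat.eq_zero_or_pos (μ.rowLen ((i:ℕ)+1)) with h0 | hpos
    · omega
    · set q := μ.rowLen ((i:ℕ)+1) - 1 with hq
      have hmemd : (((i:ℕ)+1, q) : ℕ × ℕ) ∈ μ.cells := by
        rw [YoungDiagram.mem_cells, YoungDiagram.mem_iff_lt_rowLen]; omega
      have hmemc : (((i:ℕ), q) : ℕ × ℕ) ∈ μ.cells := by
        rw [YoungDiagram.mem_cells]
        exact μ.up_left_mem (by omega) le_rfl ((YoungDiagram.mem_cells _).mp hmemd)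
      have hcol := (mem_ssytFinset.mp hT).2 ⟨((i:ℕ), q), hmemc⟩ ⟨((i:ℕ)+1, q), hmemd⟩ rfl
        (show (i:ℕ) < (i:ℕ)+1 from Nat.lt_succ_self _)
      rw [Fin.lt_def] at hcol
      have hle : ((T ⟨((i:ℕ)+1, q), hmemd⟩ : ℕ)) ≤ n := Fin.is_le _
      have hseg := (seg hT (i:ℕ) ⟨((i:ℕ), q), hmemc⟩ rfl).mp (by omega)
      have e2 : ((⟨((i:ℕ), q), hmemc⟩ : {c // c ∈ μ.cells}) : ℕ × ℕ).2 = q := rfl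
      rw [e2] at hseg
      omega
  · -- upper bound
    classical
    set F := μ.cells.attach.filter (fun c => c.1.1 = (i:ℕ) ∧ (T c : ℕ) < n) with hF
    have hinj : ∀ x ∈ F, ∀ y ∈ F, x.1.2 = y.1.2 → x = y := by
      intro x hx y hy hxy
      rw [hF, Finset.mem_filter] at hx hy
      exact Subtype.ext (Prod.ext (hx.2.1.trans hy.2.1.symm) hxy)
    have h1 : (F.image (fun c => c.1.2)) ⊆ range (μ.rowLen (i:ℕ)) := by
      intro q hq
      rw [Finset.mem_image] at hq
      obtain ⟨c, hc, rfl⟩ := hq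
      rw [hF, Finset.mem_filter] at hc
      rw [mem_range, ← hc.2.1, ← YoungDiagram.mem_iff_lt_rowLen]
      exact (YoungDiagram.mem_cells _).mp c.2
    calc prof T (i:ℕ) = (F.image (fun c => c.1.2)).card :=
          (Finset.card_image_of_injOn hinj).symm
      _ ≤ (range (μ.rowLen (i:ℕ))).card := Finset.card_le_card h1
      _ = μ.rowLen (i:ℕ) := card_range _

lemma val_ge_row {n : ℕ} {μ : YoungDiagram} {T : {c // c ∈ μ.cells} → Fin (n+1)}
    (hT : T ∈ ssytFinset (n+1) μ) : ∀ (c : {c // c ∈ μ.cells}), c.1.1 ≤ (T c : ℕ) := by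
  have key : ∀ (k : ℕ) (c : {c // c ∈ μ.cells}), c.1.1 = k → k ≤ (T c : ℕ) := by
    intro k
    induction k with
    | zero => intro c _; omega
    | succ k ih =>
      intro c hc
      have hmem : ((k, c.1.2) : ℕ × ℕ) ∈ μ.cells := by
        rw [YoungDiagram.mem_cells]
        exact μ.up_left_mem (by rw [hc]; exact Nat.le_succ k) le_rfl
          ((YoungDiagram.mem_cells _).mp c.2)
      have hcol := (mem_ssytFinset.mp hT).2 ⟨(k, c.1.2), hmem⟩ c rfl
        (by show k < c.1.1; rw [hc]; exact Nat.lt_succ_self k)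
      rw [Fin.lt_def] at hcol
      have hih := ih ⟨(k, c.1.2), hmem⟩ rfl
      omega
  exact fun c => key c.1.1 c rfl

def subShape (μ : YoungDiagram) (n : ℕ) (t : Fin n → ℕ)
    (hmono : ∀ i j : Fin n, i ≤ j → t j ≤ t i) : YoungDiagram where
  cells := μ.cells.filter (fun c => ∃ h : c.1 < n, c.2 < t ⟨c.1, h⟩)
  isLowerSet := by
    rintro ⟨b1, b2⟩ ⟨a1, a2⟩ hab hb
    have hab1 : a1 ≤ b1 := hab.1
    have hab2 : a2 ≤ b2 := hab.2
    simp only [Finset.coe_filter, Set.mem_setOf_eq] at hb ⊢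
    obtain ⟨hbμ, hb1, hb2⟩ := hb
    have haμ : (a1, a2) ∈ μ.cells := by
      rw [YoungDiagram.mem_cells]
      exact μ.up_left_mem hab1 hab2 ((YoungDiagram.mem_cells _).mp hbμ)
    refine ⟨haμ, by omega, ?_⟩
    calc a2 ≤ b2 := hab2
      _ < t ⟨b1, hb1⟩ := hb2
      _ ≤ t ⟨a1, by omega⟩ := hmono _ _ (by simp [Fin.le_def]; omega)

lemma mem_subShape {μ : YoungDiagram} {n : ℕ} {t : Fin n → ℕ}
    {hmono : ∀ i j : Fin n, i ≤ j → t j ≤ t i}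
    (ht2 : ∀ i : Fin n, t i ≤ μ.rowLen (i:ℕ)) {i q : ℕ} :
    ((i, q) ∈ subShape μ n t hmono) ↔ ∃ h : i < n, q < t ⟨i, h⟩ := by
  rw [← YoungDiagram.mem_cells]
  show (i, q) ∈ μ.cells.filter _ ↔ _
  rw [Finset.mem_filter]
  constructor
  · rintro ⟨_, h⟩; exact h
  · rintro ⟨h, hq⟩
    refine ⟨?_, h, hq⟩
    rw [YoungDiagram.mem_cells, YoungDiagram.mem_iff_lt_rowLen]
    exact lt_of_lt_of_le hq (ht2 ⟨i, h⟩)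

lemma rowLen_subShape {μ : YoungDiagram} {n : ℕ} {t : Fin n → ℕ}
    {hmono : ∀ i j : Fin n, i ≤ j → t j ≤ t i}
    (ht2 : ∀ i : Fin n, t i ≤ μ.rowLen (i:ℕ)) (i : Fin n) :
    (subShape μ n t hmono).rowLen (i:ℕ) = t i := by
  have hmem : ∀ q : ℕ, (((i:ℕ), q) ∈ subShape μ n t hmono) ↔ q < t i := by
    intro q
    rw [mem_subShape ht2]
    constructor
    · rintro ⟨h, hq⟩
      rwa [show (⟨(i:ℕ), h⟩ : Fin n) = i from Fin.ext rfl] at hq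
    · intro hq
      exact ⟨i.2, by rwa [show (⟨(i:ℕ), i.2⟩ : Fin n) = i from Fin.ext rfl]⟩
  rcases lt_trichotomy ((subShape μ n t hmono).rowLen (i:ℕ)) (t i) with h | h | h
  · exfalso
    have := (hmem _).mpr h
    rw [YoungDiagram.mem_iff_lt_rowLen] at this
    omega
  · exact h
  · exfalso
    have := (hmem (t i)).mp (by rw [YoungDiagram.mem_iff_lt_rowLen]; omega)
    omega

lemma colLen_subShape {μ : YoungDiagram} {n : ℕ} {t : Fin n → ℕ}
    {hmono : ∀ i j : Fin n, i ≤ j → t j ≤ t i}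
    (ht2 : ∀ i : Fin n, t i ≤ μ.rowLen (i:ℕ)) :
    (subShape μ n t hmono).colLen 0 ≤ n := by
  by_contra h
  have : ((n, 0) : ℕ × ℕ) ∈ subShape μ n t hmono := by
    rw [YoungDiagram.mem_iff_lt_colLen]; omega
  rw [mem_subShape ht2] at this
  obtain ⟨h', _⟩ := this
  omega

lemma row_le_n {μ : YoungDiagram} {n : ℕ} (hc : μ.colLen 0 ≤ n + 1) (c : ℕ × ℕ)
    (hmem : c ∈ μ.cells) : c.1 ≤ n := by
  rw [YoungDiagram.mem_cells] at hmem
  have h1 : c.1 < μ.colLen c.2 := by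
    rw [← YoungDiagram.mem_iff_lt_colLen]
    exact hmem
  have h2 := μ.colLen_anti 0 c.2 (Nat.zero_le _)
  omega

lemma fiber_card (n : ℕ) (μ : YoungDiagram) (hc : μ.colLen 0 ≤ n + 1)
    (t : Fin n → ℕ) (ht1 : ∀ i : Fin n, μ.rowLen ((i:ℕ)+1) ≤ t i)
    (ht2 : ∀ i : Fin n, t i ≤ μ.rowLen (i:ℕ))
    (hmono : ∀ i j : Fin n, i ≤ j → t j ≤ t i) :
    ((ssytFinset (n+1) μ).filter (fun T => ∀ i : Fin n, prof T (i:ℕ) = t i)).card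
      = (ssytFinset n (subShape μ n t hmono)).card := by
  classical
  set ν := subShape μ n t hmono with hν
  have hsub : ∀ c : ℕ × ℕ, c ∈ ν.cells → c ∈ μ.cells := fun c hc =>
    (Finset.mem_filter.mp hc).1
  have hmemν : ∀ c : ℕ × ℕ, c ∈ ν.cells ↔ ∃ h : c.1 < n, c.2 < t ⟨c.1, h⟩ := by
    intro c
    rw [YoungDiagram.mem_cells]
    exact mem_subShape ht2
  -- key equivalence for tableaux in the fiber
  have keyT : ∀ (T : {c // c ∈ μ.cells} → Fin (n+1)), T ∈ ssytFinset (n+1) μ →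
      (∀ i : Fin n, prof T (i:ℕ) = t i) →
      ∀ c : {c // c ∈ μ.cells}, ((T c : ℕ) < n ↔ c.1 ∈ ν.cells) := by
    intro T hT hp c
    by_cases h : c.1.1 < n
    · rw [hmemν]
      constructor
      · intro hlt
        refine ⟨h, ?_⟩
        have := (seg hT c.1.1 c rfl).mp hlt
        rwa [hp ⟨c.1.1, h⟩] at this
      · rintro ⟨h', hq⟩
        apply (seg hT c.1.1 c rfl).mpr
        rw [hp ⟨c.1.1, h⟩]
        exact hq
    · constructor
      · intro hlt
        exfalso
        have := val_ge_row hT c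
        omega
      · intro hcν
        rw [hmemν] at hcν
        obtain ⟨h', _⟩ := hcν
        exact absurd h' h
  refine Finset.card_bij'
    (fun T hT => fun c : {c // c ∈ ν.cells} =>
      Fin.castLT (T ⟨c.1, hsub c.1 c.2⟩)
        (by
          have hm := Finset.mem_filter.mp hT
          exact (keyT T hm.1 hm.2 ⟨c.1, hsub c.1 c.2⟩).mpr c.2))
    (fun T' hT' => fun c : {c // c ∈ μ.cells} =>
      if h : c.1 ∈ ν.cells then Fin.castLE (Nat.le_succ n) (T' ⟨c.1, h⟩) else Fin.last n)
    ?_ ?_ ?_ ?_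
  · -- maps into ssytFinset n ν
    intro T hT
    have hm := Finset.mem_filter.mp hT
    have hss := mem_ssytFinset.mp hm.1
    rw [mem_ssytFinset]
    constructor
    · intro c d hcd hcd2
      have := hss.1 ⟨c.1, hsub c.1 c.2⟩ ⟨d.1, hsub d.1 d.2⟩ hcd hcd2
      rwa [Fin.le_def] at this ⊢
    · intro c d hcd hcd2
      have := hss.2 ⟨c.1, hsub c.1 c.2⟩ ⟨d.1, hsub d.1 d.2⟩ hcd hcd2
      rwa [Fin.lt_def] at this ⊢
  · -- inverse maps into the fiber
    intro T' hT'
    have hss := mem_ssytFinset.mp hT'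
    rw [Finset.mem_filter]
    have hνlow : ∀ (c d : {c // c ∈ μ.cells}), c.1.1 ≤ d.1.1 → c.1.2 ≤ d.1.2 →
        d.1 ∈ ν.cells → c.1 ∈ ν.cells := by
      intro c d h1 h2 hd
      rw [hmemν] at hd ⊢
      obtain ⟨hdn, hdq⟩ := hd
      refine ⟨by omega, ?_⟩
      calc c.1.2 ≤ d.1.2 := h2
        _ < t ⟨d.1.1, hdn⟩ := hdq
        _ ≤ t ⟨c.1.1, by omega⟩ := hmono _ _ (by simp [Fin.le_def]; omega)
    have hcol_forces : ∀ (c d : {c // c ∈ μ.cells}), c.1.2 = d.1.2 → c.1.1 < d.1.1 →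
        c.1 ∈ ν.cells := by
      intro c d hq hlt
      have hdn : d.1.1 ≤ n := row_le_n hc d.1 d.2
      have hcn : c.1.1 < n := by omega
      rw [hmemν]
      refine ⟨hcn, ?_⟩
      have hdμ : d.1.2 < μ.rowLen d.1.1 := by
        rw [← YoungDiagram.mem_iff_lt_rowLen]
        exact (YoungDiagram.mem_cells _).mp d.2
      have hanti := μ.rowLen_anti (c.1.1 + 1) d.1.1 (by omega)
      have hht : μ.rowLen (c.1.1 + 1) ≤ t ⟨c.1.1, hcn⟩ := ht1 ⟨c.1.1, hcn⟩
      omega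
    refine ⟨mem_ssytFinset.mpr ⟨?_, ?_⟩, ?_⟩
    · -- rows weakly increase
      intro c d hcd hcd2
      by_cases h1 : c.1 ∈ ν.cells
      · by_cases h2 : d.1 ∈ ν.cells
        · rw [dif_pos h1, dif_pos h2, Fin.le_def]
          have := hss.1 ⟨c.1, h1⟩ ⟨d.1, h2⟩ hcd hcd2
          rw [Fin.le_def] at this
          exact this
        · rw [dif_pos h1, dif_neg h2]
          exact Fin.le_last _
      · by_cases h2 : d.1 ∈ ν.cells
        · exact absurd (hνlow c d (le_of_eq hcd) hcd2 h2) h1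
        · rw [dif_neg h1, dif_neg h2]
    · -- columns strictly increase
      intro c d hcd hcd2
      have h1 : c.1 ∈ ν.cells := hcol_forces c d hcd hcd2
      by_cases h2 : d.1 ∈ ν.cells
      · rw [dif_pos h1, dif_pos h2, Fin.lt_def]
        have := hss.2 ⟨c.1, h1⟩ ⟨d.1, h2⟩ hcd hcd2
        rw [Fin.lt_def] at this
        exact this
      · rw [dif_pos h1, dif_neg h2, Fin.lt_def]
        have : ((T' ⟨c.1, h1⟩ : ℕ)) < n := (T' ⟨c.1, h1⟩).2
        simpa using this
    · -- profile equals t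
      intro i
      unfold prof
      have hfe : (μ.cells.attach.filter (fun c =>
            c.1.1 = (i:ℕ) ∧ (((if h : c.1 ∈ ν.cells then
              Fin.castLE (Nat.le_succ n) (T' ⟨c.1, h⟩) else Fin.last n) : Fin (n+1)) : ℕ) < n))
          = μ.cells.attach.filter (fun c => c.1.1 = (i:ℕ) ∧ c.1 ∈ ν.cells) := by
        apply Finset.filter_congr
        intro c _
        constructor
        · rintro ⟨h1, h2⟩
          refine ⟨h1, ?_⟩
          by_contra hcn
          rw [dif_neg hcn] at h2
          simp [Fin.last] at h2
        · rintro ⟨h1, h2⟩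
          refine ⟨h1, ?_⟩
          rw [dif_pos h2]
          simpa using (T' ⟨c.1, h2⟩).2
      rw [hfe]
      have hinj : ∀ x ∈ μ.cells.attach.filter (fun c => c.1.1 = (i:ℕ) ∧ c.1 ∈ ν.cells),
          ∀ y ∈ μ.cells.attach.filter (fun c => c.1.1 = (i:ℕ) ∧ c.1 ∈ ν.cells),
          x.1.2 = y.1.2 → x = y := by
        intro x hx y hy hxy
        rw [Finset.mem_filter] at hx hy
        exact Subtype.ext (Prod.ext (hx.2.1.trans hy.2.1.symm) hxy)
      have himg : (μ.cells.attach.filter (fun c => c.1.1 = (i:ℕ) ∧ c.1 ∈ ν.cells)).image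
          (fun c => c.1.2) = range (t i) := by
        ext q
        rw [Finset.mem_image, mem_range]
        constructor
        · rintro ⟨c, hcmem, rfl⟩
          rw [Finset.mem_filter] at hcmem
          have := (hmemν c.1).mp hcmem.2.2
          obtain ⟨h', hq⟩ := this
          rwa [show (⟨c.1.1, h'⟩ : Fin n) = ⟨(i:ℕ), i.2⟩ from Fin.ext hcmem.2.1, Fin.eta] at hq
        · intro hq
          have hν2 : (((i:ℕ), q) : ℕ × ℕ) ∈ ν.cells := by
            rw [hmemν]
            exact ⟨i.2, by rwa [Fin.eta]⟩
          refine ⟨⟨((i:ℕ), q), hsub _ hν2⟩, ?_, rfl⟩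
          rw [Finset.mem_filter]
          exact ⟨Finset.mem_attach _ _, rfl, hν2⟩
      rw [← Finset.card_image_of_injOn hinj, himg, card_range]
  · -- left inverse
    intro T hT
    have hm := Finset.mem_filter.mp hT
    funext c
    dsimp only
    by_cases h : c.1 ∈ ν.cells
    · rw [dif_pos h]
      apply Fin.ext
      show ((T ⟨c.1, hsub c.1 h⟩ : ℕ)) = (T c : ℕ)
      exact congrArg (fun x => ((T x : ℕ))) (Subtype.ext rfl)
    · rw [dif_neg h]
      have hnot := (keyT T hm.1 hm.2 c).not.mpr (by simpa using h)
      have hle : (T c : ℕ) ≤ n := Fin.is_le _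
      apply Fin.ext
      show (Fin.last n : ℕ) = (T c : ℕ)
      simp only [Fin.val_last]
      omega
  · -- right inverse
    intro T' hT'
    funext c
    apply Fin.ext
    dsimp only
    rw [Fin.coe_castLT, dif_pos (show c.1 ∈ ν.cells from c.2), Fin.coe_castLE]

lemma hfac_lemma (n : ℕ) : (∏ i : Fin (n+1), ((i:ℕ).factorial : ℤ))
    = ((n.factorial : ℕ) : ℤ) * ∏ i : Fin n, ((i:ℕ).factorial : ℤ) := by
  rw [Fin.prod_univ_castSucc]
  simp [mul_comm]

lemma main_count : ∀ (n : ℕ) (μ : YoungDiagram), μ.colLen 0 ≤ n →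
    ((ssytFinset n μ).card : ℤ) * (∏ i : Fin n, ((i:ℕ).factorial : ℤ))
      = ∏ i : Fin n, ∏ j ∈ Ioi i, ((mfun n μ (i:ℕ) : ℤ) - (mfun n μ (j:ℕ) : ℤ)) := by
  intro n
  induction n with
  | zero =>
    intro μ hc
    have hcells : μ.cells = ∅ := by
      rw [Finset.eq_empty_iff_forall_notMem]
      rintro ⟨i, j⟩ hmem
      rw [YoungDiagram.mem_cells, YoungDiagram.mem_iff_lt_colLen] at hmem
      have := μ.colLen_anti 0 j (Nat.zero_le _)
      omega
    haveI : IsEmpty {c // c ∈ μ.cells} := ⟨fun c =>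
      Finset.eq_empty_iff_forall_notMem.mp hcells c.1 c.2⟩
    have huniv : ssytFinset 0 μ = Finset.univ := by
      ext T
      simp only [Finset.mem_univ, iff_true, mem_ssytFinset]
      exact ⟨fun c => isEmptyElim c, fun c => isEmptyElim c⟩
    rw [huniv, Finset.card_univ]
    simp
  | succ n ih =>
    intro μ hc
    classical
    set S := Fintype.piFinset (fun i : Fin n => Icc (μ.rowLen ((i:ℕ)+1)) (μ.rowLen (i:ℕ)))
      with hS
    have hmaps : ∀ T ∈ ssytFinset (n+1) μ, (fun i : Fin n => prof T (i:ℕ)) ∈ S := by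
      intro T hT
      rw [hS, Fintype.mem_piFinset]
      exact fun i => prof_mem_Icc hT i
    have step1 : (ssytFinset (n+1) μ).card
        = ∑ t ∈ S, ((ssytFinset (n+1) μ).filter
            (fun T => (fun i : Fin n => prof T (i:ℕ)) = t)).card :=
      Finset.card_eq_sum_card_fiberwise hmaps
    -- per-fiber + induction hypothesis
    have step2 : ∀ t ∈ S,
        (((ssytFinset (n+1) μ).filter
            (fun T => (fun i : Fin n => prof T (i:ℕ)) = t)).card : ℤ)
          * (∏ i : Fin n, ((i:ℕ).factorial : ℤ))
        = ∏ i : Fin n, ∏ j ∈ Ioi i,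
            (((t i + (n - 1 - (i:ℕ)) : ℕ) : ℤ) - ((t j + (n - 1 - (j:ℕ)) : ℕ) : ℤ)) := by
      intro t ht
      rw [hS, Fintype.mem_piFinset] at ht
      have ht1 : ∀ i : Fin n, μ.rowLen ((i:ℕ)+1) ≤ t i := fun i => (mem_Icc.mp (ht i)).1
      have ht2 : ∀ i : Fin n, t i ≤ μ.rowLen (i:ℕ) := fun i => (mem_Icc.mp (ht i)).2
      have hmono : ∀ i j : Fin n, i ≤ j → t j ≤ t i := by
        intro i j hij
        rcases eq_or_lt_of_le hij with rfl | hlt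
        · exact le_rfl
        · calc t j ≤ μ.rowLen (j:ℕ) := ht2 j
            _ ≤ μ.rowLen ((i:ℕ)+1) := μ.rowLen_anti _ _ (by
                have : (i:ℕ) < (j:ℕ) := hlt
                omega)
            _ ≤ t i := ht1 i
      have hfilter : (ssytFinset (n+1) μ).filter
            (fun T => (fun i : Fin n => prof T (i:ℕ)) = t)
          = (ssytFinset (n+1) μ).filter
            (fun T => ∀ i : Fin n, prof T (i:ℕ) = t i) := by
        apply Finset.filter_congr
        intro T _
        constructor
        · intro h i; rw [← h]
        · intro h; funext i; exact h i
      rw [hfilter, fiber_card n μ hc t ht1 ht2 hmono]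
      have hcol := colLen_subShape (hmono := hmono) ht2
      have := ih (subShape μ n t hmono) hcol
      rw [this]
      refine Finset.prod_congr rfl fun i _ => Finset.prod_congr rfl fun j _ => ?_
      have e1 : mfun n (subShape μ n t hmono) (i:ℕ) = t i + (n - 1 - (i:ℕ)) := by
        unfold mfun; rw [rowLen_subShape ht2 i]
      have e2 : mfun n (subShape μ n t hmono) (j:ℕ) = t j + (n - 1 - (j:ℕ)) := by
        unfold mfun; rw [rowLen_subShape ht2 j]
      rw [e1, e2]
    -- algebraic identity
    set m : Fin (n+1) → ℕ := fun i => mfun (n+1) μ (i:ℕ) with hm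
    have hmdec : ∀ i : Fin n, m i.succ ≤ m i.castSucc := by
      intro i
      apply le_of_lt
      exact mfun_strictanti μ (show ((i.castSucc : Fin (n+1)):ℕ) < ((i.succ : Fin (n+1)):ℕ) by
        simp [Fin.val_succ]) i.succ.2
    have halg := alg n m hmdec
    -- reindex the sum
    have hreindex : ∑ t ∈ S, ∏ i : Fin n, ∏ j ∈ Ioi i,
          (((t i + (n - 1 - (i:ℕ)) : ℕ) : ℤ) - ((t j + (n - 1 - (j:ℕ)) : ℕ) : ℤ))
        = ∑ l ∈ Fintype.piFinset (fun i : Fin n => Finset.Ico (m i.succ) (m i.castSucc)),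
          ∏ i : Fin n, ∏ j ∈ Ioi i, ((l i : ℤ) - l j) := by
    -- bijection t ↦ t + shift
      apply Finset.sum_nbij' (i := fun t => fun i : Fin n => t i + (n - 1 - (i:ℕ)))
        (j := fun l => fun i : Fin n => l i - (n - 1 - (i:ℕ)))
      · intro t ht
        rw [hS, Fintype.mem_piFinset] at ht
        rw [Fintype.mem_piFinset]
        intro i
        have h2 := mem_Icc.mp (ht i)
        rw [mem_Ico, hm]
        simp only [mfun, Fin.val_succ, Fin.coe_castSucc]
        have hi : (i:ℕ) < n := i.2
        clear hmaps step1 step2 halg ih hmdec hS hm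
        omega
      · intro l hl
        rw [Fintype.mem_piFinset] at hl
        rw [hS, Fintype.mem_piFinset]
        intro i
        have h2 := mem_Ico.mp (hl i)
        rw [hm] at h2
        simp only [mfun, Fin.val_succ, Fin.coe_castSucc] at h2
        rw [mem_Icc]
        have hi : (i:ℕ) < n := i.2
        clear hmaps step1 step2 halg ih hmdec hS hm
        omega
      · intro t ht
        funext i
        dsimp only
        exact Nat.add_sub_cancel _ _
      · intro l hl
        rw [Fintype.mem_piFinset] at hl
        funext i
        have h2 := mem_Ico.mp (hl i)
        rw [hm] at h2
        simp only [mfun, Fin.val_succ, Fin.coe_castSucc] at h2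
        dsimp only
        have hi : (i:ℕ) < n := i.2
        clear hmaps step1 step2 halg ih hmdec hS hm
        omega
      · intro t ht
        rfl
    -- put everything together
    calc ((ssytFinset (n+1) μ).card : ℤ) * (∏ i : Fin (n+1), ((i:ℕ).factorial : ℤ))
        = (∑ t ∈ S, (((ssytFinset (n+1) μ).filter
            (fun T => (fun i : Fin n => prof T (i:ℕ)) = t)).card : ℤ))
          * (((n.factorial : ℕ) : ℤ) * ∏ i : Fin n, ((i:ℕ).factorial : ℤ)) := by
          rw [step1, hfac_lemma]
          push_cast
          ring
      _ = ((n.factorial : ℕ) : ℤ) * ∑ t ∈ S, ((((ssytFinset (n+1) μ).filter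
            (fun T => (fun i : Fin n => prof T (i:ℕ)) = t)).card : ℤ)
            * ∏ i : Fin n, ((i:ℕ).factorial : ℤ)) := by
          rw [Finset.sum_mul, Finset.mul_sum]
          refine Finset.sum_congr rfl fun t _ => by ring
      _ = ((n.factorial : ℕ) : ℤ) * ∑ t ∈ S, ∏ i : Fin n, ∏ j ∈ Ioi i,
            (((t i + (n - 1 - (i:ℕ)) : ℕ) : ℤ) - ((t j + (n - 1 - (j:ℕ)) : ℕ) : ℤ)) := by
          rw [Finset.sum_congr rfl step2]
      _ = ((n.factorial : ℕ) : ℤ) *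
            ∑ l ∈ Fintype.piFinset (fun i : Fin n => Finset.Ico (m i.succ) (m i.castSucc)),
              ∏ i : Fin n, ∏ j ∈ Ioi i, ((l i : ℤ) - l j) := by rw [hreindex]
      _ = ∏ i : Fin (n+1), ∏ j ∈ Ioi i, ((m i : ℤ) - m j) := halg.symm
      _ = ∏ i : Fin (n+1), ∏ j ∈ Ioi i, ((mfun (n+1) μ (i:ℕ) : ℤ) - (mfun (n+1) μ (j:ℕ) : ℤ)) := rfl

lemma fact_prod (s : ℕ) : ∀ r : ℕ, (∏ q ∈ range r, (s + 1 + q)) * s.factorial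
    = (r + s).factorial := by
  intro r
  induction r with
  | zero => simp
  | succ r ih =>
    rw [Finset.prod_range_succ, mul_comm (∏ q ∈ range r, (s + 1 + q)) (s + 1 + r), mul_assoc, ih,
      show r + 1 + s = (r + s) + 1 by ring, Nat.factorial_succ]
    ring

lemma prod_cells_rows {M : Type*} [CommMonoid M] (n : ℕ) (μ : YoungDiagram)
    (hn : μ.colLen 0 ≤ n) (f : ℕ × ℕ → M) :
    ∏ c ∈ μ.cells, f c = ∏ i ∈ range n, ∏ q ∈ range (μ.rowLen i), f (i, q) := by
  have hmaps : ∀ c ∈ μ.cells, c.1 ∈ range n := by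
    intro c hmem
    rw [mem_range]
    have h2 := row_le_n (show μ.colLen 0 ≤ (n-1) + 1 by omega) c hmem
    have hpos : 0 < μ.colLen 0 := by
      rw [YoungDiagram.mem_cells] at hmem
      have h1 : c.1 < μ.colLen c.2 := by
        rw [← YoungDiagram.mem_iff_lt_colLen]; exact hmem
      have := μ.colLen_anti 0 c.2 (Nat.zero_le _)
      omega
    omega
  rw [← Finset.prod_fiberwise_of_maps_to hmaps f]
  refine Finset.prod_congr rfl fun i _ => ?_
  have hrow : μ.cells.filter (fun c => c.1 = i) = μ.row i := by
    ext c
    rw [Finset.mem_filter, YoungDiagram.mem_row_iff, YoungDiagram.mem_cells]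
  rw [hrow, YoungDiagram.row_eq_prod, Finset.prod_product, Finset.prod_singleton]

theorem hook_content_conj2 (n : ℕ) (μ : YoungDiagram) :
    ((ssytFinset n μ).card : ℤ) *
        ∏ c ∈ μ.cells, (((μ.rowLen c.1 - c.2) + (μ.colLen c.2 - c.1) - 1 : ℕ) : ℤ)
      = ∏ c ∈ μ.cells, ((n : ℤ) + (c.2 : ℤ) - (c.1 : ℤ)) := by
  by_cases hc : μ.colLen 0 ≤ n
  · -- main case
    have hmain := main_count n μ hc
    -- identifications
    have hH : ∏ c ∈ μ.cells, (((μ.rowLen c.1 - c.2) + (μ.colLen c.2 - c.1) - 1 : ℕ) : ℤ)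
        = ∏ i : Fin n, ((∏ q ∈ range (μ.rowLen (i:ℕ)), hookl μ (i:ℕ) q : ℕ) : ℤ) := by
      rw [prod_cells_rows n μ hc (fun c =>
        (((μ.rowLen c.1 - c.2) + (μ.colLen c.2 - c.1) - 1 : ℕ) : ℤ))]
      rw [show (∏ i ∈ range n, ∏ q ∈ range (μ.rowLen i),
            (((μ.rowLen (i, q).1 - (i, q).2) + (μ.colLen (i, q).2 - (i, q).1) - 1 : ℕ) : ℤ))
          = ∏ i ∈ range n, ((∏ q ∈ range (μ.rowLen i), hookl μ i q : ℕ) : ℤ) from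
        Finset.prod_congr rfl fun i _ => (Nat.cast_prod _ _).symm]
      exact (Fin.prod_univ_eq_prod_range
        (fun i => ((∏ q ∈ range (μ.rowLen i), hookl μ i q : ℕ) : ℤ)) n).symm
    have hC : ∏ c ∈ μ.cells, ((n : ℤ) + (c.2 : ℤ) - (c.1 : ℤ))
        = ∏ i : Fin n, ((∏ q ∈ range (μ.rowLen (i:ℕ)), ((n - 1 - (i:ℕ)) + 1 + q) : ℕ) : ℤ) := by
      rw [prod_cells_rows n μ hc (fun c => ((n : ℤ) + (c.2 : ℤ) - (c.1 : ℤ)))]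
      rw [show (∏ i ∈ range n, ∏ q ∈ range (μ.rowLen i),
            ((n : ℤ) + ((i, q).2 : ℤ) - ((i, q).1 : ℤ)))
          = ∏ i ∈ range n, ((∏ q ∈ range (μ.rowLen i), ((n - 1 - i) + 1 + q) : ℕ) : ℤ) from ?_]
      · exact (Fin.prod_univ_eq_prod_range
          (fun i => ((∏ q ∈ range (μ.rowLen i), ((n - 1 - i) + 1 + q) : ℕ) : ℤ)) n).symm
      · refine Finset.prod_congr rfl fun i hi => ?_
        rw [mem_range] at hi
        rw [Nat.cast_prod]
        refine Finset.prod_congr rfl fun q _ => ?_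
        show ((n : ℤ) + (q : ℤ) - (i : ℤ)) = _
        have e : ((n - 1 - i) + 1 + q : ℕ) = (n - i) + q := by omega
        rw [e]
        push_cast [Nat.cast_sub (le_of_lt hi)]
        ring
    have hP : (∏ i : Fin n, ((∏ j ∈ Ioi i, (mfun n μ (i:ℕ) - mfun n μ (j:ℕ)) : ℕ) : ℤ))
        = ∏ i : Fin n, ∏ j ∈ Ioi i, ((mfun n μ (i:ℕ) : ℤ) - (mfun n μ (j:ℕ) : ℤ)) := by
      refine Finset.prod_congr rfl fun i _ => ?_
      rw [Nat.cast_prod]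
      refine Finset.prod_congr rfl fun j hj => ?_
      have hij : i < j := Finset.mem_Ioi.mp hj
      have hmlt := mfun_strictanti (n := n) μ (show (i:ℕ) < (j:ℕ) from hij) j.2
      rw [Nat.cast_sub (le_of_lt hmlt)]
    have hrowprod : (∏ i : Fin n, ((∏ q ∈ range (μ.rowLen (i:ℕ)), hookl μ (i:ℕ) q : ℕ) : ℤ))
          * (∏ i : Fin n, ((∏ j ∈ Ioi i, (mfun n μ (i:ℕ) - mfun n μ (j:ℕ)) : ℕ) : ℤ))
        = ∏ i : Fin n, (((mfun n μ (i:ℕ)).factorial : ℕ) : ℤ) := by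
      rw [← Finset.prod_mul_distrib]
      refine Finset.prod_congr rfl fun i _ => ?_
      rw [← Nat.cast_mul, row_hook_lemma μ hc i]
    have hcontprod : (∏ i : Fin n, ((∏ q ∈ range (μ.rowLen (i:ℕ)), ((n - 1 - (i:ℕ)) + 1 + q) : ℕ) : ℤ))
          * (∏ i : Fin n, (((n - 1 - (i:ℕ)).factorial : ℕ) : ℤ))
        = ∏ i : Fin n, (((mfun n μ (i:ℕ)).factorial : ℕ) : ℤ) := by
      rw [← Finset.prod_mul_distrib]
      refine Finset.prod_congr rfl fun i _ => ?_
      rw [← Nat.cast_mul, fact_prod (n - 1 - (i:ℕ)) (μ.rowLen (i:ℕ))]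
      rfl
    have hreflect : (∏ i : Fin n, (((n - 1 - (i:ℕ)).factorial : ℕ) : ℤ))
        = ∏ i : Fin n, (((i:ℕ).factorial : ℕ) : ℤ) := by
      rw [Fin.prod_univ_eq_prod_range (fun i => (((n - 1 - i).factorial : ℕ) : ℤ)) n,
        Fin.prod_univ_eq_prod_range (fun i => (((i:ℕ).factorial : ℕ) : ℤ)) n]
      exact Finset.prod_range_reflect (fun i => (((i).factorial : ℕ) : ℤ)) n
    have hSF0 : (∏ i : Fin n, (((i:ℕ).factorial : ℕ) : ℤ)) ≠ 0 := by
      apply Finset.prod_ne_zero_iff.mpr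
      intro i _
      exact_mod_cast (Nat.factorial_pos (i:ℕ)).ne'
    apply mul_right_cancel₀ hSF0
    calc ((ssytFinset n μ).card : ℤ) *
          (∏ c ∈ μ.cells, (((μ.rowLen c.1 - c.2) + (μ.colLen c.2 - c.1) - 1 : ℕ) : ℤ))
          * (∏ i : Fin n, (((i:ℕ).factorial : ℕ) : ℤ))
        = (((ssytFinset n μ).card : ℤ) * ∏ i : Fin n, ((i:ℕ).factorial : ℤ)) *
            (∏ i : Fin n, ((∏ q ∈ range (μ.rowLen (i:ℕ)), hookl μ (i:ℕ) q : ℕ) : ℤ)) := by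
          rw [hH]; push_cast; ring
      _ = (∏ i : Fin n, ∏ j ∈ Ioi i, ((mfun n μ (i:ℕ) : ℤ) - (mfun n μ (j:ℕ) : ℤ))) *
            (∏ i : Fin n, ((∏ q ∈ range (μ.rowLen (i:ℕ)), hookl μ (i:ℕ) q : ℕ) : ℤ)) := by
          rw [hmain]
      _ = ∏ i : Fin n, (((mfun n μ (i:ℕ)).factorial : ℕ) : ℤ) := by
          rw [← hP, ← hrowprod]; ring
      _ = (∏ c ∈ μ.cells, ((n : ℤ) + (c.2 : ℤ) - (c.1 : ℤ)))
            * (∏ i : Fin n, (((i:ℕ).factorial : ℕ) : ℤ)) := by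
          rw [hC, ← hreflect, hcontprod]
  · -- degenerate case : too many rows
    push_neg at hc
    rw [ssyt_card_zero hc]
    have hcell : ((n, 0) : ℕ × ℕ) ∈ μ.cells := by
      rw [YoungDiagram.mem_cells, YoungDiagram.mem_iff_lt_colLen]
      exact hc
    rw [show ((0:ℕ) : ℤ) * _ = (0:ℤ) from zero_mul _]
    symm
    apply Finset.prod_eq_zero hcell
    show (n : ℤ) + ((0:ℕ) : ℤ) - ((n:ℕ) : ℤ) = 0
    simp


/-- **Stanley's hook content formula.**  The number of semistandard Young tableaux of
shape `I = μ` with entries in `{1, …, n}` equals `Π_{(p,q) ∈ I} (n + q − p)/h(p,q)`,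
where `h(p,q) = (i_p − q) + (ĩ_q − p) + 1` is the hook length of the cell `(p,q)`
(rows and columns indexed from `1`; below cells are `0`-indexed, so the content
`q − p` is unchanged and `h(c) = (rowLen c.1 − c.2) + (colLen c.2 − c.1) − 1`).
Equivalently `s_I(1, …, 1)` (with `n` ones) equals this product; in particular
`s_I(1, …, 1) > 0` whenever `I` has at most `n` parts. -/
theorem hook_content_formula (n : ℕ) (μ : YoungDiagram) :
    (eval (fun _ => (1 : ℤ)) (schurPoly n μ) = ((ssytFinset n μ).card : ℤ)) ∧
    (((ssytFinset n μ).card : ℤ) *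
        ∏ c ∈ μ.cells, (((μ.rowLen c.1 - c.2) + (μ.colLen c.2 - c.1) - 1 : ℕ) : ℤ)
      = ∏ c ∈ μ.cells, ((n : ℤ) + (c.2 : ℤ) - (c.1 : ℤ))) ∧
    (μ.colLen 0 ≤ n → 0 < eval (fun _ => (1 : ℤ)) (schurPoly n μ)) := by
  refine ⟨eval_one_schurPoly n μ, hook_content_conj2 n μ, fun h => ?_⟩
  rw [eval_one_schurPoly]
  exact_mod_cast ssyt_nonempty h
end
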